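/- arXiv:1404.4096 — 11 statements merged into one kernel-verified Lean document; each statement's English description precedes it below -/
import Mathlib

section
/- A field k has the property that every unit u of k satisfies u^p = 1 (for a prime p) if and only if k = F_2, or k = F_3 with p = 2, or k = F_{p+1} with p a Mersenne prime. -/
open Polynomial

theorem stmt_0 (p : ℕ) (hp : p.Prime) (k : Type*) [Field k] :
    (∀ u : kˣ, u ^ p = 1) ↔
      ((∃ _ : Fintype k, Fintype.card k = 2) ∨
       ((∃ _ : Fintype k, Fintype.card k = 3) ∧ p = 2) ∨
       ((∃ _ : Fintype k, Fintype.card k = p + 1) ∧ ∃ n, p = 2 ^ n - 1)) := by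
  constructor
  · intro h
    -- k is finite
    have hpoly : (X ^ (p + 1) - X : k[X]) ≠ 0 := by
      intro hc
      have : ((X : k[X]) ^ (p + 1) - X).coeff (p + 1) = 0 := by rw [hc]; simp
      rw [coeff_sub, coeff_X_pow, coeff_X_of_ne_one (by have := hp.pos; omega)] at this; simp at this
    have hfin : Finite k := by
      have : (Set.univ : Set k).Finite := by
        apply (Polynomial.finite_setOf_isRoot hpoly).subset
        intro x _
        simp only [Set.mem_setOf_eq, IsRoot.def, eval_sub, eval_pow, eval_X, sub_eq_zero]
        rcases eq_or_ne x 0 with rfl | hx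
        · simp [pow_succ]
        · have := h (Units.mk0 x hx)
          have hx1 : x ^ p = 1 := by
            have := congrArg (Units.val) this
            simpa using this
          rw [pow_succ, hx1, one_mul]
      exact Set.finite_univ_iff.mp this
    have : Fintype k := Fintype.ofFinite k
    classical
    -- card kˣ divides p
    have hdvd : Fintype.card kˣ ∣ p := by
      have h1 : Monoid.exponent kˣ ∣ p := Monoid.exponent_dvd_of_forall_pow_eq_one h
      have h2 : Monoid.exponent kˣ = Nat.card kˣ := IsCyclic.exponent_eq_card
      rwa [h2, Nat.card_eq_fintype_card] at h1
    have hcard : Fintype.card kˣ = Fintype.card k - 1 := Fintype.card_units k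
    have hk2 : 2 ≤ Fintype.card k := Fintype.one_lt_card
    rcases (Nat.dvd_prime hp).mp hdvd with h1 | h1
    · left
      exact ⟨inferInstance, by omega⟩
    · -- card k = p + 1
      have hcardk : Fintype.card k = p + 1 := by
        have := hp.two_le
        omega
      obtain ⟨q, hq⟩ := CharP.exists k
      obtain ⟨n, hqprime, hcardq⟩ := FiniteField.card k q
      rcases hqprime.eq_two_or_odd' with hq2 | hqodd
      · right; right
        refine ⟨⟨inferInstance, hcardk⟩, n, ?_⟩
        rw [hcardk, hq2] at hcardq
        omega
      · right; left
        have : Odd (q ^ (n : ℕ)) := hqodd.pow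
        rw [hcardk] at hcardq
        have hpeven : Even p := by
          rcases this with ⟨m, hm⟩
          exact ⟨m, by omega⟩
        have hp2 : p = 2 := (Nat.Prime.even_iff hp).mp hpeven
        exact ⟨⟨inferInstance, by omega⟩, hp2⟩
  · rintro (⟨hf, hcard⟩ | ⟨⟨hf, hcard⟩, hp2⟩ | ⟨⟨hf, hcard⟩, _⟩) u
    · classical
      have : Fintype.card kˣ = 1 := by rw [Fintype.card_units, hcard]
      have hu : u = 1 := by
        have := Fintype.card_le_one_iff.mp (le_of_eq this) u 1
        exact this
      rw [hu, one_pow]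
    · classical
      have hcu : Fintype.card kˣ = 2 := by rw [Fintype.card_units, hcard]
      rw [hp2, ← hcu]
      exact pow_card_eq_one
    · classical
      have hcu : Fintype.card kˣ = p := by rw [Fintype.card_units, hcard]; omega
      rw [← hcu]
      exact pow_card_eq_one
end

section
/- If G is an elementary abelian p-group and p is a Mersenne prime, then every unit t of the group algebra F_2[G] satisfies t^p = 1. -/
lemma sq_eq (G : Type*) [CommGroup G] (x : MonoidAlgebra (ZMod 2) G) :
    x ^ 2 = MonoidAlgebra.mapDomain (fun g : G => g ^ 2) x := by
  haveI : CharP (MonoidAlgebra (ZMod 2) G) 2 :=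
    charP_of_injective_algebraMap (algebraMap (ZMod 2) _).injective 2
  have key : (frobenius (MonoidAlgebra (ZMod 2) G) 2) =
      MonoidAlgebra.mapDomainRingHom (ZMod 2) (powMonoidHom 2 : G →* G) := by
    apply MonoidAlgebra.ringHom_ext
    · intro b
      rw [frobenius_def, MonoidAlgebra.single_pow, one_pow]
      show _ = MonoidAlgebra.mapDomain _ (MonoidAlgebra.single 1 b)
      rw [MonoidAlgebra.mapDomain_single, powMonoidHom_apply, one_pow]
      congr 1
      revert b; decide
    · intro a
      rw [frobenius_def, MonoidAlgebra.single_pow]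
      show _ = MonoidAlgebra.mapDomain _ (MonoidAlgebra.single a 1)
      rw [MonoidAlgebra.mapDomain_single, powMonoidHom_apply, one_pow]
  have := congrFun (congrArg DFunLike.coe key) x
  exact (by simpa [frobenius_def] using this : _ = MonoidAlgebra.mapDomain (⇑(powMonoidHom 2 : G →* G)) x)

lemma pow_two_pow (G : Type*) [CommGroup G] (n : ℕ)
    (x : MonoidAlgebra (ZMod 2) G) :
    x ^ 2 ^ n = MonoidAlgebra.mapDomain (fun g : G => g ^ 2 ^ n) x := by
  induction n with
  | zero =>
      simp only [pow_zero, pow_one]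
      ext; simp; rw [show (fun g : G => g) = id from rfl, Finsupp.mapDomain_id]
  | succ n ih =>
      have h2 : x ^ 2 ^ (n + 1) = (x ^ 2 ^ n) ^ 2 := by
        rw [← pow_mul, pow_succ]
      rw [h2, ih, sq_eq, show ∀ (f g : G → G) (y : MonoidAlgebra (ZMod 2) G), MonoidAlgebra.mapDomain f (MonoidAlgebra.mapDomain g y) = MonoidAlgebra.mapDomain (f ∘ g) y from fun f g y => by ext; simp [Finsupp.mapDomain_comp]]
      congr 1
      funext g
      simp only [Function.comp_apply, powMonoidHom_apply]
      rw [← pow_mul, pow_succ]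

theorem stmt_1 (p : ℕ) (hp : p.Prime) (hm : ∃ n, p = 2 ^ n - 1)
    (G : Type*) [CommGroup G] (hG : ∀ g : G, g ≠ 1 → orderOf g = p) :
    ∀ t : (MonoidAlgebra (ZMod 2) G)ˣ, t ^ p = 1 := by
  obtain ⟨n, hn⟩ := hm
  have h1 : 1 ≤ 2 ^ n := Nat.one_le_two_pow
  have hpn : 2 ^ n = p + 1 := by omega
  have hg : ∀ g : G, g ^ 2 ^ n = g := by
    intro g
    by_cases h : g = 1
    · simp [h]
    · rw [hpn, pow_succ, ← hG g h, pow_orderOf_eq_one, one_mul]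
  have hx : ∀ x : MonoidAlgebra (ZMod 2) G, x ^ (p + 1) = x := by
    intro x
    rw [← hpn, pow_two_pow]
    rw [show (fun g : G => g ^ 2 ^ n) = id from funext hg]
    ext; simp [Finsupp.mapDomain_id]
  intro t
  have ht : t ^ (p + 1) = t := by
    apply Units.ext
    rw [Units.val_pow_eq_pow_val]
    exact hx t
  have : t ^ p * t = 1 * t := by rw [← pow_succ, ht, one_mul]
  exact mul_right_cancel this
end

section
/- If G is an elementary abelian 2-group, then every unit t of the group algebra F_3[G] satisfies t^2 = 1. -/
theorem stmt_3 (G : Type*) [CommGroup G] (hG : ∀ g : G, g ^ 2 = 1) :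
    ∀ t : (MonoidAlgebra (ZMod 3) G)ˣ, t ^ 2 = 1 := by
  haveI : CharP (MonoidAlgebra (ZMod 3) G) 3 :=
    charP_of_injective_algebraMap (R := ZMod 3) (fun a b h => by
      have h' : MonoidAlgebra.single (1 : G) a = MonoidAlgebra.single (1 : G) b := by
        simpa [MonoidAlgebra.coe_algebraMap, Function.comp] using h
      exact MonoidAlgebra.single_right_inj.mp h') 3
  have hfrob : ∀ x : MonoidAlgebra (ZMod 3) G, x ^ 3 = x := by
    intro x
    induction x using MonoidAlgebra.induction with
    | zero => simp
    | single_add g a f _ _ ih =>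
        rw [add_pow_char, ih, MonoidAlgebra.single_pow]
        congr 1
        · have : g ^ 3 = g := by
            rw [pow_succ, hG g, one_mul]
          rw [this, ZMod.pow_card a]
  intro t
  have h3 : t ^ 3 = t := Units.ext (by push_cast; exact hfrob t)
  calc t ^ 2 = t ^ 3 * t⁻¹ := by group
    _ = t * t⁻¹ := by rw [h3]
    _ = 1 := mul_inv_cancel t
end

section
/- Let p be an odd prime and let C_p be the cyclic group of order p. If every unit of the group algebra F_2[C_p] satisfies u^p = 1, then p is a Mersenne prime. -/
set_option maxHeartbeats 1000000 in
set_option synthInstance.maxHeartbeats 400000 in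
theorem stmt_5 (p : ℕ) [Fact p.Prime] (hodd : Odd p)
    (h : ∀ u : (MonoidAlgebra (ZMod 2) (Multiplicative (ZMod p)))ˣ, u ^ p = 1) :
    ∃ n, p = 2 ^ n - 1 := by
  classical
  have hp : p.Prime := Fact.out
  set A := MonoidAlgebra (ZMod 2) (Multiplicative (ZMod p)) with hAdef
  haveI : NeZero ((Fintype.card (Multiplicative (ZMod p)) : ZMod 2)) := by
    constructor
    rw [Fintype.card_multiplicative, ZMod.card]
    intro h0
    rw [ZMod.natCast_eq_zero_iff] at h0
    exact (Nat.not_even_iff_odd.mpr hodd) ((even_iff_two_dvd).mpr h0)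
  haveI : IsSemisimpleRing A := by
    haveI : NeZero (Nat.card (Multiplicative (ZMod p)) : ZMod 2) := by
      rwa [Nat.card_eq_fintype_card]
    exact inferInstance
  haveI : Finite A := Finite.of_equiv _ MonoidAlgebra.coeffEquiv.symm
  haveI : IsArtinianRing A := inferInstance
  haveI : IsReduced A := by
    constructor
    intro x hx
    have hrad : (Module.annihilator A A).IsRadical :=
      IsSemisimpleModule.annihilator_isRadical (M := A) A
    have hann : Module.annihilator A A = ⊥ := by
      ext y
      rw [Module.mem_annihilator, Ideal.mem_bot]
      constructor
      · intro hy; simpa using hy 1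
      · rintro rfl m; simp
    rw [hann] at hrad
    have : x ∈ (⊥ : Ideal A) := hrad ⟨hx.choose, by simpa using hx.choose_spec⟩
    simpa using this
  set e := IsArtinianRing.equivPi A with he
  set g : A := MonoidAlgebra.of (ZMod 2) (Multiplicative (ZMod p)) (Multiplicative.ofAdd 1) with hgdef
  have hg : g * g ≠ g := by
    intro hgg
    rw [hgdef, ← MonoidHom.map_mul] at hgg
    have := MonoidAlgebra.of_injective hgg
    have h21 : (1 + 1 : ZMod p) = 1 := by
      have := congrArg Multiplicative.toAdd this
      simpa [← ofAdd_add] using this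
    have : (1 : ZMod p) = 0 := by linear_combination h21
    exact one_ne_zero this
  have hex : ∃ I : MaximalSpectrum A, (e g I) * (e g I) ≠ e g I := by
    by_contra hc
    push_neg at hc
    apply hg
    apply e.injective
    rw [map_mul e]
    exact funext hc
  obtain ⟨I, hI⟩ := hex
  haveI : I.1.IsMaximal := I.2
  letI : Field (A ⧸ I.1) := Ideal.Quotient.field I.1
  haveI : Finite (A ⧸ I.1) := Finite.of_surjective _ (Ideal.Quotient.mk_surjective (I := I.1))
  haveI : Fintype (A ⧸ I.1) := Fintype.ofFinite _
  haveI : CharP (A ⧸ I.1) 2 :=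
    charP_of_injective_ringHom
      ((Ideal.Quotient.mk I.1).comp (algebraMap (ZMod 2) A)).injective 2
  -- every unit of the residue field satisfies v^p = 1
  have hunit : ∀ v : (A ⧸ I.1)ˣ, v ^ p = 1 := by
    intro v
    set φ : (A ⧸ I.1) →* (∀ J : MaximalSpectrum A, A ⧸ J.1) :=
      MonoidHom.mulSingle (fun J : MaximalSpectrum A => A ⧸ J.1) I with hφ
    set u : Aˣ := Units.map e.symm.toRingHom.toMonoidHom (Units.map φ v) with hu
    have hup := h u
    have : Units.map ((Pi.evalRingHom _ I).comp e.toRingHom).toMonoidHom u = v := by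
      apply Units.ext
      simp only [hu, hφ, Units.coe_map, MonoidHom.coe_coe, RingHom.coe_comp,
        RingEquiv.coe_toRingHom, Function.comp_apply, Pi.evalRingHom_apply,
        RingHom.toMonoidHom_eq_coe, RingHom.coe_monoidHom_mk]
      have hx := congrFun (e.apply_symm_apply
        ((MonoidHom.mulSingle (fun J : MaximalSpectrum A => A ⧸ J.1) I)
          (v : A ⧸ I.1))) I
      refine hx.trans ?_
      show Pi.mulSingle (M := fun J : MaximalSpectrum A => A ⧸ J.1) I (v : A ⧸ I.1) I
        = (v : A ⧸ I.1)
      exact Pi.mulSingle_eq_same (M := fun J : MaximalSpectrum A => A ⧸ J.1) I _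
    rw [← this, ← map_pow, hup, map_one]
  obtain ⟨n, hpn, hcard⟩ := FiniteField.card (A ⧸ I.1) 2
  obtain ⟨v, hv⟩ := IsCyclic.exists_generator (α := (A ⧸ I.1)ˣ)
  have hord : orderOf v = Fintype.card (A ⧸ I.1)ˣ := by
    rw [← Nat.card_eq_fintype_card]; exact orderOf_eq_card_of_forall_mem_zpowers hv
  have hdvd : (2 ^ (n : ℕ) - 1) ∣ p := by
    have : orderOf v ∣ p := orderOf_dvd_of_pow_eq_one (hunit v)
    rwa [hord, Fintype.card_units, hcard] at this
  rcases (Nat.Prime.eq_one_or_self_of_dvd hp _ hdvd) with h1 | h1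
  · exfalso
    have hcu : Fintype.card (A ⧸ I.1)ˣ = 1 := by
      rw [Fintype.card_units, hcard]; exact h1
    haveI : Subsingleton ((A ⧸ I.1)ˣ) := Fintype.card_le_one_iff_subsingleton.mp (le_of_eq hcu)
    apply hI
    rcases eq_or_ne (e g I) 0 with h0 | h0
    · rw [h0]; ring
    · obtain ⟨w, hw⟩ := isUnit_iff_ne_zero.mpr h0
      have hw1 : w = 1 := Subsingleton.elim w 1
      rw [← hw, hw1, Units.val_one, one_mul]
  · exact ⟨n, h1.symm⟩
end

section
/- For an odd prime p, the number of units of the group algebra F_2[C_p] is at most 2^{p-1} - 1, with equality if and only if 2 is a primitive root modulo p. -/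
open Polynomial
namespace Stmt8Aux


noncomputable def unitsEquivSubtype (M : Type*) [Monoid M] : Mˣ ≃ {x : M // IsUnit x} where
  toFun u := ⟨u, u.isUnit⟩
  invFun x := x.2.unit
  left_inv u := Units.ext u.isUnit.unit_spec
  right_inv x := Subtype.ext x.2.unit_spec

section counting
open Finset
variable (M : Type*) [CommRing M] [Fintype M] [Nontrivial M] [DecidableEq M]

lemma card_units_eq : Nat.card Mˣ = (univ.filter (fun x : M => IsUnit x)).card := by
  classical
  rw [Nat.card_congr (unitsEquivSubtype M), Nat.card_eq_fintype_card, Fintype.card_subtype]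

lemma filter_subset_ne :
    (univ.filter (fun x : M => IsUnit x)) ⊆ (univ.filter (fun x : M => x ≠ 0)) := by
  intro x hx
  simp only [mem_filter, mem_univ, true_and] at *
  rintro rfl
  exact zero_ne_one (isUnit_zero_iff.mp hx)

lemma card_ne_filter : (univ.filter (fun x : M => x ≠ 0)).card = Fintype.card M - 1 := by
  rw [filter_ne', card_erase_of_mem (mem_univ 0), card_univ]

lemma card_units_le : Nat.card Mˣ ≤ Fintype.card M - 1 := by
  rw [card_units_eq, ← card_ne_filter]
  exact card_le_card (filter_subset_ne M)

lemma card_units_eq_iff :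
    Nat.card Mˣ = Fintype.card M - 1 ↔ ∀ x : M, x ≠ 0 → IsUnit x := by
  rw [card_units_eq, ← card_ne_filter]
  constructor
  · intro h x hx
    have h5 := Finset.eq_of_subset_of_card_le (filter_subset_ne M) (ge_of_eq h)
    have hx' : x ∈ univ.filter (fun x : M => x ≠ 0) := by simp [hx]
    rw [← h5] at hx'
    simpa using hx'
  · intro h
    congr 1
    apply Finset.Subset.antisymm (filter_subset_ne M)
    intro x hx
    simp only [mem_filter, mem_univ, true_and] at *
    exact h x hx

end counting

noncomputable def adjEquivFun (f : Polynomial (ZMod 2)) (hf : f ≠ 0) :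
    AdjoinRoot f ≃ (Fin (AdjoinRoot.powerBasis hf).dim → ZMod 2) :=
  (AdjoinRoot.powerBasis hf).basis.equivFun.toEquiv

lemma finite_adj (f : Polynomial (ZMod 2)) (hf : f ≠ 0) : Finite (AdjoinRoot f) :=
  Finite.of_equiv _ (adjEquivFun f hf).symm

lemma card_adj (f : Polynomial (ZMod 2)) (hf : f ≠ 0) :
    Nat.card (AdjoinRoot f) = 2 ^ f.natDegree := by
  have h1 := Nat.card_congr (adjEquivFun f hf)
  rw [h1, Nat.card_fun, Nat.card_eq_fintype_card (α := ZMod 2), ZMod.card,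
    Nat.card_eq_fintype_card, Fintype.card_fin]
  rfl

variable (p : ℕ) [Fact p.Prime]

lemma root_pow_self : (AdjoinRoot.root (X ^ p - 1 : (ZMod 2)[X])) ^ p = 1 := by
  have h := AdjoinRoot.eval₂_root (X ^ p - 1 : (ZMod 2)[X])
  simp only [eval₂_sub, eval₂_pow, eval₂_X, eval₂_one] at h
  linear_combination h

noncomputable def rootUnit : (AdjoinRoot (X ^ p - 1 : (ZMod 2)[X]))ˣ :=
  Units.mkOfMulEqOne (AdjoinRoot.root _) (AdjoinRoot.root _ ^ (p - 1)) (by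
    rw [← pow_succ']
    have : p - 1 + 1 = p := Nat.succ_pred_eq_of_pos (Fact.out (p := p.Prime)).pos
    rw [this, root_pow_self])

lemma rootUnit_pow : (rootUnit p) ^ p = 1 := by
  ext
  push_cast [rootUnit]
  exact root_pow_self p

noncomputable def homG : Multiplicative (ZMod p) →* AdjoinRoot (X ^ p - 1 : (ZMod 2)[X]) :=
  (Units.coeHom _).comp <| AddMonoidHom.toMultiplicativeLeft
    (ZMod.lift p ⟨zmultiplesHom (Additive _ˣ) (Additive.ofMul (rootUnit p)), by
      simp only [zmultiplesHom_apply]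
      rw [← ofMul_zpow]
      norm_cast
      rw [rootUnit_pow]
      rfl⟩)

lemma homG_apply (a : ZMod p) :
    homG p (Multiplicative.ofAdd a) = AdjoinRoot.root _ ^ a.val := by
  have ha : a = ((a.val : ℤ) : ZMod p) := by push_cast [ZMod.natCast_val, ZMod.cast_id]; rfl
  rw [homG]
  simp only [MonoidHom.comp_apply, AddMonoidHom.toMultiplicativeLeft_apply_apply]
  rw [show (Multiplicative.ofAdd a).toAdd = a from rfl]
  conv_lhs => rw [ha]
  rw [ZMod.lift_coe]
  simp only [zmultiplesHom_apply]
  rw [← ofMul_zpow]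
  rw [show ((Additive.ofMul ((rootUnit p) ^ (a.val : ℤ))).toMul) = (rootUnit p) ^ (a.val : ℤ) from rfl]
  rw [zpow_natCast]
  push_cast [rootUnit]
  rfl


noncomputable def toQ : MonoidAlgebra (ZMod 2) (Multiplicative (ZMod p)) →ₐ[ZMod 2]
    AdjoinRoot (X ^ p - 1 : (ZMod 2)[X]) :=
  MonoidAlgebra.lift _ _ _ (homG p)

lemma ofAdd_one_pow : (MonoidAlgebra.of (ZMod 2) (Multiplicative (ZMod p))
    (Multiplicative.ofAdd (1 : ZMod p))) ^ p = 1 := by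
  rw [← map_pow, ← ofAdd_nsmul]
  have : p • (1 : ZMod p) = 0 := by
    rw [nsmul_eq_mul, mul_one, ZMod.natCast_self]
  rw [this]
  exact map_one _

noncomputable def fromQ : AdjoinRoot (X ^ p - 1 : (ZMod 2)[X]) →ₐ[ZMod 2]
    MonoidAlgebra (ZMod 2) (Multiplicative (ZMod p)) :=
  AdjoinRoot.liftAlgHom _ (Algebra.ofId _ _)
    (MonoidAlgebra.of (ZMod 2) (Multiplicative (ZMod p)) (Multiplicative.ofAdd 1)) (by
      have h : aeval (MonoidAlgebra.of (ZMod 2) (Multiplicative (ZMod p)) (Multiplicative.ofAdd 1))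
          (X ^ p - 1 : (ZMod 2)[X]) = 0 := by
        rw [map_sub, map_pow, aeval_X, aeval_one, ofAdd_one_pow, sub_self]
      exact show eval₂ _ _ _ = 0 from h)

noncomputable def algEquivQ : MonoidAlgebra (ZMod 2) (Multiplicative (ZMod p)) ≃ₐ[ZMod 2]
    AdjoinRoot (X ^ p - 1 : (ZMod 2)[X]) := by
  refine AlgEquiv.ofAlgHom (toQ p) (fromQ p) (AdjoinRoot.algHom_ext ?_)
    (MonoidAlgebra.algHom_ext ?_ (Subsingleton.elim _ _))
  · rw [AlgHom.comp_apply, AlgHom.id_apply, fromQ, AdjoinRoot.liftAlgHom_root, toQ,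
      MonoidAlgebra.lift_of, homG_apply, ZMod.val_one, pow_one]
  · intro x
    have hx : x = Multiplicative.ofAdd (x.toAdd) := rfl
    rw [AlgHom.comp_apply, AlgHom.id_apply]
    have h1 : (toQ p) (MonoidAlgebra.single x 1) = AdjoinRoot.root _ ^ (x.toAdd).val := by
      rw [toQ, MonoidAlgebra.lift_single, one_smul]
      conv_lhs => rw [hx]
      rw [homG_apply]
    rw [h1, map_pow, fromQ, AdjoinRoot.liftAlgHom_root, ← map_pow, ← ofAdd_nsmul]
    have h2 : (x.toAdd).val • (1 : ZMod p) = x.toAdd := by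
      rw [nsmul_eq_mul, mul_one, ZMod.natCast_val, ZMod.cast_id]
    rw [h2]
    rfl


lemma pcast (hodd : Odd p) : ((p : ℕ) : ZMod 2) = 1 := by
  have h1 : p % 2 = 1 := Nat.odd_iff.mp hodd
  rw [← ZMod.natCast_mod, h1, Nat.cast_one]

lemma eval_one_phi (hodd : Odd p) : (cyclotomic p (ZMod 2)).eval 1 = 1 := by
  rw [eval_one_cyclotomic_prime, pcast p hodd]

lemma coprime_phi (hodd : Odd p) : IsCoprime (X - C 1 : (ZMod 2)[X]) (cyclotomic p (ZMod 2)) := by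
  obtain ⟨q, hq⟩ := X_sub_C_dvd_sub_C_eval (a := (1 : ZMod 2)) (p := cyclotomic p (ZMod 2))
  rw [eval_one_phi p hodd, map_one] at hq
  simp only [C_1] at hq ⊢
  exact ⟨-q, 1, by linear_combination hq⟩

lemma phi_mul : (X - C 1 : (ZMod 2)[X]) * cyclotomic p (ZMod 2) = X ^ p - 1 := by
  rw [mul_comm, C_1, cyclotomic_prime_mul_X_sub_one]

lemma span_eq : (Ideal.span {(X ^ p - 1 : (ZMod 2)[X])}) =
    Ideal.span {(X - C 1 : (ZMod 2)[X])} * Ideal.span {cyclotomic p (ZMod 2)} := by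
  rw [Ideal.span_singleton_mul_span_singleton, phi_mul]

noncomputable def eRing (hodd : Odd p) : MonoidAlgebra (ZMod 2) (Multiplicative (ZMod p)) ≃+*
    (ZMod 2 × AdjoinRoot (cyclotomic p (ZMod 2))) :=
  ((algEquivQ p).toRingEquiv.trans
    ((Ideal.quotEquivOfEq (span_eq p)).trans
      (Ideal.quotientMulEquivQuotientProd _ _
        ((Ideal.isCoprime_span_singleton_iff _ _).mpr (coprime_phi p hodd))))).trans
    (RingEquiv.prodCongr (quotientSpanXSubCAlgEquiv (1 : ZMod 2)).toRingEquiv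
      (RingEquiv.refl _))

lemma card_units_A (hodd : Odd p) : Nat.card (MonoidAlgebra (ZMod 2) (Multiplicative (ZMod p)))ˣ
    = Nat.card (AdjoinRoot (cyclotomic p (ZMod 2)))ˣ := by
  rw [Nat.card_congr (Units.mapEquiv (eRing p hodd).toMulEquiv).toEquiv,
    Nat.card_congr (MulEquiv.prodUnits).toEquiv, Nat.card_prod]
  have : Nat.card (ZMod 2)ˣ = 1 := by
    haveI : Unique (ZMod 2)ˣ := Unique.mk' _
    exact Nat.card_unique
  rw [this, one_mul]


lemma root_order {g : (ZMod 2)[X]} (hodd : Odd p) (hg : Irreducible g)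
    (hdvd : g ∣ cyclotomic p (ZMod 2)) :
    orderOf (AdjoinRoot.root g) = p ∧ (AdjoinRoot.root g) ≠ 0 := by
  haveI := Fact.mk hg
  have hp := Fact.out (p := p.Prime)
  set F := AdjoinRoot g
  set r : F := AdjoinRoot.root g with hr
  have hroot : (Polynomial.aeval r) g = 0 := by
    rw [AdjoinRoot.aeval_eq, AdjoinRoot.mk_self]
  have hphi : (Polynomial.aeval r) (cyclotomic p (ZMod 2)) = 0 := by
    obtain ⟨t, ht⟩ := hdvd
    rw [ht, map_mul, hroot, zero_mul]
  have hrp : r ^ p = 1 := by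
    obtain ⟨s, hs⟩ := (dvd_trans hdvd (cyclotomic.dvd_X_pow_sub_one p (ZMod 2)) :
      g ∣ X ^ p - 1)
    have h := AdjoinRoot.aeval_eq (f := g) (X ^ p - 1)
    have h2 : AdjoinRoot.mk g (X ^ p - 1) = 0 := by
      rw [hs, map_mul, AdjoinRoot.mk_self, zero_mul]
    rw [h2, map_sub, map_pow, Polynomial.aeval_X, map_one] at h
    linear_combination h
  have hr1 : r ≠ 1 := by
    intro h
    rw [h] at hphi
    rw [Polynomial.aeval_def, Polynomial.eval₂_at_one, eval_one_phi p hodd, map_one] at hphi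
    exact one_ne_zero hphi
  have hr0 : r ≠ 0 := by
    intro h
    rw [h, zero_pow hp.ne_zero] at hrp
    exact zero_ne_one hrp
  refine ⟨?_, hr0⟩
  have hdvd' : orderOf r ∣ p := orderOf_dvd_of_pow_eq_one hrp
  rcases (Nat.Prime.eq_one_or_self_of_dvd hp _ hdvd') with h | h
  · exact absurd (orderOf_eq_one_iff.mp h) hr1
  · exact h

lemma orderOf_two_dvd_degree {g : (ZMod 2)[X]} (hodd : Odd p) (hg : Irreducible g)
    (hdvd : g ∣ cyclotomic p (ZMod 2)) :
    orderOf (2 : ZMod p) ∣ g.natDegree := by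
  haveI := Fact.mk hg
  haveI : Finite (AdjoinRoot g) := finite_adj g hg.ne_zero
  haveI : Fintype (AdjoinRoot g) := Fintype.ofFinite _
  obtain ⟨hord, hr0⟩ := root_order p hodd hg hdvd
  have hcard : Fintype.card (AdjoinRoot g) = 2 ^ g.natDegree := by
    rw [← Nat.card_eq_fintype_card, card_adj g hg.ne_zero]
  have h1 := FiniteField.pow_card_sub_one_eq_one _ hr0
  have hpd : p ∣ 2 ^ g.natDegree - 1 := by
    rw [← hord, ← hcard]
    exact orderOf_dvd_of_pow_eq_one h1
  have h2 : (2 : ZMod p) ^ g.natDegree = 1 := by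
    have h3 : ((2 ^ g.natDegree - 1 : ℕ) : ZMod p) = 0 :=
      (ZMod.natCast_eq_zero_iff _ _).mpr hpd
    rw [Nat.cast_sub Nat.one_le_two_pow, Nat.cast_pow, Nat.cast_ofNat, Nat.cast_one] at h3
    linear_combination h3
  exact orderOf_dvd_of_pow_eq_one h2


lemma irred_of_ord (hodd : Odd p) (hord : orderOf (2 : ZMod p) = p - 1) :
    Irreducible (cyclotomic p (ZMod 2)) := by
  have hp := Fact.out (p := p.Prime)
  have hmonic : (cyclotomic p (ZMod 2)).Monic := cyclotomic.monic p _
  have hne : cyclotomic p (ZMod 2) ≠ 0 := hmonic.ne_zero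
  have hdegPhi : (cyclotomic p (ZMod 2)).natDegree = p - 1 := by
    rw [natDegree_cyclotomic, Nat.totient_prime hp]
  have hnotunit : ¬ IsUnit (cyclotomic p (ZMod 2)) := by
    intro h
    have h2 := natDegree_eq_zero_of_isUnit h
    rw [hdegPhi] at h2
    have := hp.two_le
    omega
  obtain ⟨g, hgirr, hgdvd⟩ := WfDvdMonoid.exists_irreducible_factor hnotunit hne
  have hdd := orderOf_two_dvd_degree p hodd hgirr hgdvd
  rw [hord] at hdd
  have hgle : g.natDegree ≤ p - 1 := hdegPhi ▸ natDegree_le_of_dvd hgdvd hne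
  have hgpos : 0 < g.natDegree := hgirr.natDegree_pos
  have hgeq : g.natDegree = p - 1 := le_antisymm hgle (Nat.le_of_dvd hgpos hdd)
  obtain ⟨t, ht⟩ := hgdvd
  have ht0 : t ≠ 0 := by rintro rfl; rw [mul_zero] at ht; exact hne ht
  have hg0 : g ≠ 0 := hgirr.ne_zero
  have hdegt : t.natDegree = 0 := by
    have h3 := natDegree_mul hg0 ht0
    rw [← ht, hdegPhi, hgeq] at h3
    omega
  have htunit : IsUnit t := by
    rw [Polynomial.isUnit_iff]
    refine ⟨t.coeff 0, ?_, (Polynomial.eq_C_of_natDegree_eq_zero hdegt).symm⟩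
    have h4 : t.coeff 0 ≠ 0 := by
      intro h
      apply ht0
      rw [Polynomial.eq_C_of_natDegree_eq_zero hdegt, h, map_zero]
    exact h4.isUnit
  exact Associated.irreducible
    ⟨htunit.unit, by rw [IsUnit.unit_spec]; exact ht.symm⟩ hgirr

lemma ord_of_irred (hodd : Odd p) (hirr : Irreducible (cyclotomic p (ZMod 2))) :
    orderOf (2 : ZMod p) = p - 1 := by
  classical
  have hp := Fact.out (p := p.Prime)
  have hp2 : p ≠ 2 := by rintro rfl; simp [Nat.odd_iff] at hodd
  have hp3 : 3 ≤ p := by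
    have := hp.two_le
    omega
  haveI := Fact.mk hirr
  haveI : Finite (AdjoinRoot (cyclotomic p (ZMod 2))) := finite_adj _ hirr.ne_zero
  haveI : Fintype (AdjoinRoot (cyclotomic p (ZMod 2))) := Fintype.ofFinite _
  obtain ⟨hord, hr0⟩ := root_order p hodd hirr dvd_rfl
  set F := AdjoinRoot (cyclotomic p (ZMod 2)) with hF
  set r : F := AdjoinRoot.root (cyclotomic p (ZMod 2)) with hr
  set d := orderOf (2 : ZMod p) with hd
  have h2ne : (2 : ZMod p) ≠ 0 := by
    intro h
    have h5 : ((2 : ℕ) : ZMod p) = 0 := by exact_mod_cast h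
    have h6 := (ZMod.natCast_eq_zero_iff 2 p).mp h5
    exact hp2 ((Nat.prime_dvd_prime_iff_eq hp Nat.prime_two).mp h6)
  have hfermat : (2 : ZMod p) ^ (p - 1) = 1 := ZMod.pow_card_sub_one_eq_one h2ne
  have hddvd : d ∣ p - 1 := orderOf_dvd_of_pow_eq_one hfermat
  have hdpos : 0 < d :=
    (isOfFinOrder_iff_pow_eq_one.mpr ⟨p - 1, by omega, hfermat⟩).orderOf_pos
  have hpdvd : p ∣ 2 ^ d - 1 := by
    have h1 : (2 : ZMod p) ^ d = 1 := pow_orderOf_eq_one _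
    have h3 : ((2 ^ d - 1 : ℕ) : ZMod p) = 0 := by
      rw [Nat.cast_sub Nat.one_le_two_pow, Nat.cast_pow, Nat.cast_ofNat, Nat.cast_one, h1,
        sub_self]
    exact (ZMod.natCast_eq_zero_iff _ _).mp h3
  have hrpow : r ^ (2 ^ d) = r := by
    have h1 : r ^ (2 ^ d - 1) = 1 := by
      apply orderOf_dvd_iff_pow_eq_one.mp
      rw [hord]
      exact hpdvd
    have h2 : 2 ^ d - 1 + 1 = 2 ^ d := by
      have := Nat.one_le_two_pow (n := d)
      omega
    calc r ^ (2 ^ d) = r ^ (2 ^ d - 1 + 1) := by rw [h2]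
    _ = r ^ (2 ^ d - 1) * r := pow_succ r _
    _ = r := by rw [h1, one_mul]
  haveI : CharP F 2 := charP_of_injective_algebraMap (algebraMap (ZMod 2) F).injective 2
  have hfrob : ∀ x : F, x ^ (2 ^ d) = x := by
    let φ := iterateFrobenius F 2 d
    have hφdef : ∀ x : F, φ x = x ^ (2 ^ d) := fun x => iterateFrobenius_def (p := 2) (n := d) (x := x)
    have hcomm : ∀ c : ZMod 2, φ (algebraMap (ZMod 2) F c) = algebraMap (ZMod 2) F c := by
      intro c
      exact RingHom.congr_fun
        (Subsingleton.elim (φ.comp (algebraMap (ZMod 2) F)) (algebraMap (ZMod 2) F)) c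
    let ψ : F →ₐ[ZMod 2] F := { φ with commutes' := hcomm }
    have hψr : ψ r = r := by
      show φ r = r
      rw [hφdef]
      exact hrpow
    have hid : ψ = AlgHom.id (ZMod 2) F := AdjoinRoot.algHom_ext (by rw [AlgHom.id_apply]; exact hψr)
    intro x
    have h7 := AlgHom.congr_fun hid x
    have h8 : ψ x = x ^ (2 ^ d) := hφdef x
    rw [h8] at h7
    simpa using h7
  have hd1 : 1 < 2 ^ d := Nat.one_lt_two_pow_iff.mpr hdpos.ne'
  set P : Polynomial F := X ^ (2 ^ d) - X with hP
  have hPdeg : P.natDegree = 2 ^ d := by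
    rw [hP, natDegree_sub_eq_left_of_natDegree_lt, natDegree_X_pow]
    rw [natDegree_X, natDegree_X_pow]
    exact hd1
  have hPne : P ≠ 0 := by
    intro h
    rw [h, natDegree_zero] at hPdeg
    omega
  have hroots : ∀ x : F, x ∈ P.roots := by
    intro x
    rw [Polynomial.mem_roots']
    exact ⟨hPne, by simp [hP, Polynomial.IsRoot, hfrob x]⟩
  have hcardle : Fintype.card F ≤ 2 ^ d := by
    have h1 : (Finset.univ : Finset F) ⊆ P.roots.toFinset := fun x _ =>
      Multiset.mem_toFinset.mpr (hroots x)
    calc Fintype.card F = (Finset.univ : Finset F).card := (Finset.card_univ).symm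
    _ ≤ P.roots.toFinset.card := Finset.card_le_card h1
    _ ≤ Multiset.card P.roots := Multiset.toFinset_card_le _
    _ ≤ P.natDegree := Polynomial.card_roots' P
    _ = 2 ^ d := hPdeg
  have hcardF : Fintype.card F = 2 ^ (p - 1) := by
    rw [← Nat.card_eq_fintype_card, hF, card_adj _ hirr.ne_zero, natDegree_cyclotomic,
      Nat.totient_prime hp]
  have hle : p - 1 ≤ d := by
    rw [hcardF] at hcardle
    exact (Nat.pow_le_pow_iff_right (by norm_num)).mp hcardle
  exact le_antisymm (Nat.le_of_dvd (by omega) hddvd) hle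


lemma degree_phi_ne_zero : (cyclotomic p (ZMod 2)).degree ≠ 0 := by
  have hp := Fact.out (p := p.Prime)
  have h1 : 0 < (cyclotomic p (ZMod 2)).natDegree := by
    rw [natDegree_cyclotomic, Nat.totient_prime hp]
    have := hp.two_le
    omega
  exact (Polynomial.natDegree_pos_iff_degree_pos.mp h1).ne'

lemma units_iff_irred :
    (∀ x : AdjoinRoot (cyclotomic p (ZMod 2)), x ≠ 0 → IsUnit x) ↔
      Irreducible (cyclotomic p (ZMod 2)) := by
  have hp := Fact.out (p := p.Prime)
  have hne : cyclotomic p (ZMod 2) ≠ 0 := (cyclotomic.monic p _).ne_zero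
  haveI : Finite (AdjoinRoot (cyclotomic p (ZMod 2))) := finite_adj _ hne
  haveI : Nontrivial (AdjoinRoot (cyclotomic p (ZMod 2))) :=
    AdjoinRoot.nontrivial _ (degree_phi_ne_zero p)
  constructor
  · intro h
    have hfield : IsField (AdjoinRoot (cyclotomic p (ZMod 2))) :=
      { exists_pair_ne := exists_pair_ne _
        mul_comm := mul_comm
        mul_inv_cancel := fun {a} ha => (h a ha).exists_right_inv }
    have hmax : (Ideal.span {cyclotomic p (ZMod 2)} :
        Ideal (Polynomial (ZMod 2))).IsMaximal :=
      Ideal.Quotient.maximal_of_isField _ hfield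
    have hprime : Prime (cyclotomic p (ZMod 2)) :=
      (Ideal.span_singleton_prime hne).mp hmax.isPrime
    exact hprime.irreducible
  · intro hirr x hx
    haveI : IsDomain (AdjoinRoot (cyclotomic p (ZMod 2))) :=
      AdjoinRoot.isDomain_of_prime (UniqueFactorizationMonoid.irreducible_iff_prime.mp hirr)
    have hinj : Function.Injective (fun y : AdjoinRoot (cyclotomic p (ZMod 2)) => x * y) :=
      fun a b hab => mul_left_cancel₀ hx hab
    obtain ⟨y, hy⟩ := (Finite.injective_iff_surjective.mp hinj) 1
    exact IsUnit.of_mul_eq_one y hy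

end Stmt8Aux

theorem stmt_8 (p : ℕ) [Fact p.Prime] (hodd : Odd p) :
    Nat.card (MonoidAlgebra (ZMod 2) (Multiplicative (ZMod p)))ˣ ≤ 2 ^ (p - 1) - 1 ∧
    (Nat.card (MonoidAlgebra (ZMod 2) (Multiplicative (ZMod p)))ˣ = 2 ^ (p - 1) - 1 ↔
      orderOf (2 : ZMod p) = p - 1) := by
  classical
  open Stmt8Aux in
  have hp := Fact.out (p := p.Prime)
  have hne : cyclotomic p (ZMod 2) ≠ 0 := (cyclotomic.monic p _).ne_zero
  haveI : Finite (AdjoinRoot (cyclotomic p (ZMod 2))) := finite_adj _ hne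
  haveI : Fintype (AdjoinRoot (cyclotomic p (ZMod 2))) := Fintype.ofFinite _
  haveI : Nontrivial (AdjoinRoot (cyclotomic p (ZMod 2))) :=
    AdjoinRoot.nontrivial _ (degree_phi_ne_zero p)
  have hcardB : Fintype.card (AdjoinRoot (cyclotomic p (ZMod 2))) = 2 ^ (p - 1) := by
    rw [← Nat.card_eq_fintype_card, card_adj _ hne, natDegree_cyclotomic,
      Nat.totient_prime hp]
  have hA := card_units_A p hodd
  constructor
  · rw [hA]
    have h1 := card_units_le (AdjoinRoot (cyclotomic p (ZMod 2)))
    rwa [hcardB] at h1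
  · rw [hA]
    have h1 := card_units_eq_iff (AdjoinRoot (cyclotomic p (ZMod 2)))
    rw [hcardB] at h1
    rw [h1]
    constructor
    · intro h
      exact ord_of_irred p hodd ((units_iff_irred p).mp h)
    · intro h
      exact (units_iff_irred p).mpr (irred_of_ord p hodd h)
end

section
/- Let p be an odd prime. Then 2 is a primitive root modulo p if and only if every element of F_2[C_p] that is not the norm element and not in the kernel of the augmentation map is a unit. -/
open Polynomial MonoidAlgebra

variable (p : ℕ) [Fact p.Prime]

abbrev Gp := Multiplicative (ZMod p)
abbrev Ap := MonoidAlgebra (ZMod 2) (Gp p)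

noncomputable def gp : Ap p := of (ZMod 2) (Gp p) (Multiplicative.ofAdd 1)

noncomputable def phi : (ZMod 2)[X] →ₐ[ZMod 2] Ap p := Polynomial.aeval (gp p)

lemma gp_pow (k : ℕ) : (gp p) ^ k = of (ZMod 2) (Gp p) (Multiplicative.ofAdd (k : ZMod p)) := by
  rw [gp, ← map_pow]
  congr 1
  rw [← ofAdd_nsmul]
  simp

lemma gp_pow_p : (gp p) ^ p = 1 := by
  rw [gp_pow]
  simp [MonoidAlgebra.of_apply, MonoidAlgebra.one_def]

noncomputable def eps : Ap p →ₐ[ZMod 2] ZMod 2 := MonoidAlgebra.lift (ZMod 2) (ZMod 2) (Gp p) 1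

lemma eps_eq (t : Ap p) : eps p t = t.coeff.sum fun _ a => a := by
  rw [eps, MonoidAlgebra.lift_apply]
  simp

lemma eps_of (σ : Gp p) : eps p (of (ZMod 2) (Gp p) σ) = 1 := by
  simp [eps]

lemma phi_apply_coeff (u : (ZMod 2)[X]) (hu : u.natDegree < p) (j : ℕ) (hj : j < p) :
    (phi p u).coeff (Multiplicative.ofAdd (j : ZMod p)) = u.coeff j := by
  have hp : 0 < p := (Fact.out : p.Prime).pos
  rw [phi, Polynomial.aeval_eq_sum_range' hu]
  have : ∀ i : ℕ, u.coeff i • (gp p) ^ i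
      = MonoidAlgebra.single (Multiplicative.ofAdd ((i : ZMod p))) (u.coeff i) := by
    intro i
    rw [gp_pow, MonoidAlgebra.of_apply, MonoidAlgebra.smul_single', mul_one]
  simp only [this]
  rw [MonoidAlgebra.coeff_sum, Finsupp.finset_sum_apply]
  rw [Finset.sum_eq_single j]
  · simp [MonoidAlgebra.single_apply]
  · intro i hi hij
    rw [MonoidAlgebra.single_apply, if_neg]
    intro h
    apply hij
    have : ((i : ZMod p)) = (j : ZMod p) := by
      simpa using h
    have := congrArg ZMod.val this
    rwa [ZMod.val_natCast_of_lt (Finset.mem_range.mp hi), ZMod.val_natCast_of_lt hj] at this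
  · intro h
    exact absurd (Finset.mem_range.mpr hj) h

lemma phi_inj_small (u : (ZMod 2)[X]) (hu : u.natDegree < p) (h : phi p u = 0) : u = 0 := by
  ext j
  rcases lt_or_ge j p with hj | hj
  · have := phi_apply_coeff p u hu j hj
    rw [h] at this
    simpa using this.symm
  · simp only [Polynomial.coeff_zero]
    exact Polynomial.coeff_eq_zero_of_natDegree_lt (lt_of_lt_of_le hu hj)

lemma phi_surj (t : Ap p) : ∃ u : (ZMod 2)[X], u.natDegree < p ∧ phi p u = t := by
  have hp : 0 < p := (Fact.out : p.Prime).pos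
  refine ⟨∑ k ∈ Finset.range p, Polynomial.C (t.coeff (Multiplicative.ofAdd (k : ZMod p))) * X ^ k, ?_, ?_⟩
  · refine lt_of_le_of_lt (Polynomial.natDegree_sum_le _ _) ?_
    rw [Finset.fold_max_lt]
    refine ⟨hp, fun i hi => ?_⟩
    exact lt_of_le_of_lt (Polynomial.natDegree_C_mul_X_pow_le _ _) (Finset.mem_range.mp hi)
  · ext σ
    set j := (Multiplicative.toAdd σ).val with hjdef
    have hjlt : j < p := ZMod.val_lt _
    have hσ : σ = Multiplicative.ofAdd ((j : ZMod p)) := by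
      simp [hjdef, ZMod.natCast_val, ZMod.cast_id]
    rw [hσ, phi_apply_coeff p _ ?_ j hjlt]
    · rw [Polynomial.finset_sum_coeff]
      rw [Finset.sum_eq_single j]
      · simp
      · intro i hi hij
        simp [Polynomial.coeff_C_mul, Polynomial.coeff_X_pow, hij, Ne.symm hij]
      · intro h
        exact absurd (Finset.mem_range.mpr hjlt) h
    · refine lt_of_le_of_lt (Polynomial.natDegree_sum_le _ _) ?_
      rw [Finset.fold_max_lt]
      exact ⟨hp, fun i hi => lt_of_le_of_lt (Polynomial.natDegree_C_mul_X_pow_le _ _) (Finset.mem_range.mp hi)⟩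

lemma phi_ker (u : (ZMod 2)[X]) (h : phi p u = 0) : (X ^ p - 1 : (ZMod 2)[X]) ∣ u := by
  have hp : 0 < p := (Fact.out : p.Prime).pos
  have hmonic : (X ^ p - 1 : (ZMod 2)[X]).Monic := by
    simpa using Polynomial.monic_X_pow_sub_C (1 : ZMod 2) hp.ne'
  have hphi0 : phi p (X ^ p - 1) = 0 := by
    rw [map_sub, map_one, map_pow, phi, Polynomial.aeval_X, gp_pow_p, sub_self]
  have hmod : phi p (u %ₘ (X ^ p - 1)) = 0 := by
    have := Polynomial.modByMonic_add_div u (X ^ p - 1)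
    have h2 : phi p (u %ₘ (X^p-1) + (X^p-1) * (u /ₘ (X^p-1))) = 0 := by rw [this]; exact h
    rw [map_add, map_mul, hphi0, zero_mul, add_zero] at h2
    exact h2
  have hdeg : (u %ₘ (X ^ p - 1)).natDegree < p := by
    have hne : (X ^ p - 1 : (ZMod 2)[X]) ≠ 1 := by
      intro h1
      have := congrArg (Polynomial.natDegree) h1
      rw [show (X ^ p - 1 : (ZMod 2)[X]).natDegree = p by
        simpa using Polynomial.natDegree_X_pow_sub_C (n := p) (r := (1 : ZMod 2))] at this
      simpa [hp.ne'] using this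
    have := Polynomial.natDegree_modByMonic_lt u hmonic hne
    rwa [show (X ^ p - 1 : (ZMod 2)[X]).natDegree = p by
      simpa using Polynomial.natDegree_X_pow_sub_C (n := p) (r := (1 : ZMod 2))] at this
  have := phi_inj_small p _ hdeg hmod
  exact (Polynomial.modByMonic_eq_zero_iff_dvd hmonic).mp this

noncomputable def Np : Ap p := ∑ g : Gp p, of (ZMod 2) (Gp p) g

noncomputable def Phi : (ZMod 2)[X] := ∑ i ∈ Finset.range p, X ^ i

lemma phi_Phi : phi p (Phi p) = Np p := by
  rw [Phi, map_sum, Np]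
  have h1 : ∀ i ∈ Finset.range p, phi p (X ^ i) = of (ZMod 2) (Gp p) (Multiplicative.ofAdd ((i : ZMod p))) := by
    intro i _
    rw [map_pow, phi, Polynomial.aeval_X, gp_pow]
  rw [Finset.sum_congr rfl h1]
  refine Finset.sum_nbij' (fun i => Multiplicative.ofAdd ((i : ZMod p)))
    (fun σ => (Multiplicative.toAdd σ).val) ?_ ?_ ?_ ?_ ?_
  · intro i _; exact Finset.mem_univ _
  · intro σ _; exact Finset.mem_range.mpr (ZMod.val_lt _)
  · intro i hi
    simp [ZMod.val_natCast_of_lt (Finset.mem_range.mp hi)]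
  · intro σ _
    simp [ZMod.natCast_val, ZMod.cast_id]
  · intro i _; rfl

lemma Np_mul_of (σ : Gp p) : Np p * of (ZMod 2) (Gp p) σ = Np p := by
  rw [Np, Finset.sum_mul]
  have : ∀ τ : Gp p, of (ZMod 2) (Gp p) τ * of (ZMod 2) (Gp p) σ = of (ZMod 2) (Gp p) (τ * σ) := by
    intro τ; rw [← map_mul]
  simp only [this]
  exact Fintype.sum_equiv (Equiv.mulRight σ) _ _ (fun τ => rfl)

lemma Np_mul (t : Ap p) : Np p * t = eps p t • Np p := by
  induction t using MonoidAlgebra.induction_on with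
  | of σ => rw [Np_mul_of, eps_of, one_smul]
  | add f g hf hg => rw [mul_add, hf, hg, map_add, add_smul]
  | smul r f hf =>
      rw [mul_smul_comm, hf, map_smul, smul_assoc]

lemma Phi_mul_X_sub_one : Phi p * (X - 1) = X ^ p - 1 := by
  have := geom_sum_mul (X : (ZMod 2)[X]) p
  simpa [Phi] using this

lemma Phi_natDegree : (Phi p).natDegree = p - 1 := by
  have hp : 0 < p := (Fact.out : p.Prime).pos
  have hc : ∀ k, (Phi p).coeff k = if k < p then 1 else 0 := by
    intro k
    rw [Phi, Polynomial.finset_sum_coeff]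
    simp only [Polynomial.coeff_X_pow]
    rw [Finset.sum_ite_eq (Finset.range p) k (fun _ => (1:ZMod 2))]
    simp [Finset.mem_range]
  apply le_antisymm
  · apply Polynomial.natDegree_le_iff_coeff_eq_zero.mpr
    intro k hk
    rw [hc]
    rw [if_neg]
    omega
  · apply Polynomial.le_natDegree_of_ne_zero
    rw [hc, if_pos (by omega)]
    exact one_ne_zero

lemma Phi_monic : (Phi p).Monic := by
  have hp : 0 < p := (Fact.out : p.Prime).pos
  rw [Polynomial.Monic, Polynomial.leadingCoeff, Phi_natDegree]
  rw [Phi, Polynomial.finset_sum_coeff]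
  simp only [Polynomial.coeff_X_pow]
  rw [Finset.sum_ite_eq (Finset.range p) (p-1) (fun _ => (1:ZMod 2))]
  simp [Finset.mem_range]
  omega

lemma Phi_eval_one (hodd : Odd p) : (Phi p).eval 1 = 1 := by
  have hp2 : p % 2 = 1 := Nat.odd_iff.mp hodd
  rw [Phi]
  rw [Polynomial.eval_finset_sum]
  simp only [Polynomial.eval_pow, Polynomial.eval_X, one_pow]
  rw [Finset.sum_const, Finset.card_range, nsmul_eq_mul, mul_one]
  rw [← Nat.mod_add_div p 2, hp2]
  push_cast
  rw [show ((2:ZMod 2)) = 0 by rfl]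
  ring

lemma Phi_ne_zero : Phi p ≠ 0 := (Phi_monic p).ne_zero

lemma zmod2_pow_two_pow (c : ZMod 2) (n : ℕ) : c ^ 2 ^ n = c := ZMod.pow_card_pow c

lemma factor_deg (hodd : Odd p) (q : (ZMod 2)[X]) (hq : Irreducible q) (hdvd : q ∣ Phi p) :
    q.natDegree = orderOf (2 : ZMod p) := by
  have hp : p.Prime := Fact.out
  have hp2 : p ≠ 2 := by rintro rfl; exact (by decide : ¬ Odd 2) hodd
  haveI : Fact (Irreducible q) := ⟨hq⟩
  set d := orderOf (2 : ZMod p) with hd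
  set D := q.natDegree with hD
  have hDpos : 0 < D := hq.natDegree_pos
  -- the field (AdjoinRoot q) and root (AdjoinRoot.root q)
  have hqμ : (Polynomial.aeval (AdjoinRoot.root q)) q = 0 := by
    rw [AdjoinRoot.aeval_eq, AdjoinRoot.mk_self]
  have hΦμ : (Polynomial.aeval (AdjoinRoot.root q)) (Phi p) = 0 := by
    obtain ⟨c, hc⟩ := hdvd
    rw [hc, map_mul, hqμ, zero_mul]
  have hμp : (AdjoinRoot.root q) ^ p = 1 := by
    have := congrArg (Polynomial.aeval (AdjoinRoot.root q)) (Phi_mul_X_sub_one p)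
    rw [map_mul, hΦμ, zero_mul, map_sub, map_one, map_pow, Polynomial.aeval_X] at this
    have := this.symm
    rwa [sub_eq_zero] at this
  have hμ1 : (AdjoinRoot.root q) ≠ 1 := by
    intro h1
    rw [h1] at hΦμ
    rw [show (1 : (AdjoinRoot q)) = algebraMap (ZMod 2) (AdjoinRoot q) 1 by simp,
      Polynomial.aeval_algebraMap_apply_eq_algebraMap_eval] at hΦμ
    rw [Phi_eval_one p hodd] at hΦμ
    simp at hΦμ
  have hordμ : orderOf (AdjoinRoot.root q) = p := by
    have h1 : orderOf (AdjoinRoot.root q) ∣ p := orderOf_dvd_of_pow_eq_one hμp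
    rcases (Nat.Prime.eq_one_or_self_of_dvd hp _ h1) with h | h
    · exact absurd (orderOf_eq_one_iff.mp h) hμ1
    · exact h
  have hμ0 : (AdjoinRoot.root q) ≠ 0 := by
    intro h0
    rw [h0, zero_pow hp.pos.ne'] at hμp
    exact zero_ne_one hμp
  -- finiteness of (AdjoinRoot q)
  let pb := AdjoinRoot.powerBasis hq.ne_zero
  haveI : Fintype (AdjoinRoot q) := Module.fintypeOfFintype pb.basis
  have hfinrank : Module.finrank (ZMod 2) (AdjoinRoot q) = D := by
    rw [pb.finrank, AdjoinRoot.powerBasis_dim]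
  have hcardL : Fintype.card (AdjoinRoot q) = 2 ^ D := by
    rw [Module.card_eq_pow_finrank (K := ZMod 2) (V := (AdjoinRoot q)), ZMod.card, hfinrank]
  -- p ∣ 2 ^ D - 1 hence d ∣ D
  have hdvdD : d ∣ D := by
    have hunit : IsUnit (AdjoinRoot.root q) := IsUnit.mk0 (AdjoinRoot.root q) hμ0
    have hord : orderOf hunit.unit = p := by rw [← hordμ, ← orderOf_units, IsUnit.unit_spec]
    have hcard : p ∣ Fintype.card (AdjoinRoot q)ˣ := hord ▸ orderOf_dvd_card
    rw [Fintype.card_units, hcardL] at hcard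
    have h2 : ((2 ^ D - 1 : ℕ) : ZMod p) = 0 := (ZMod.natCast_eq_zero_iff _ _).mpr hcard
    rw [Nat.cast_sub (Nat.one_le_two_pow), Nat.cast_pow, Nat.cast_ofNat, Nat.cast_one,
      sub_eq_zero] at h2
    exact orderOf_dvd_of_pow_eq_one h2
  -- D ≤ d via Frobenius
  have h2unit : (2 : ZMod p) ≠ 0 := by
    intro h
    have h2 : ((2 : ℕ) : ZMod p) = 0 := by exact_mod_cast h
    have hdd := (ZMod.natCast_eq_zero_iff 2 p).mp h2
    have hle := Nat.le_of_dvd (by norm_num) hdd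
    have := hp.two_le
    omega
  have hdpos : 0 < d := by
    have hfin : IsOfFinOrder (2 : ZMod p) :=
      isOfFinOrder_iff_pow_eq_one.mpr ⟨p - 1, by have := hp.two_le; omega, ZMod.pow_card_sub_one_eq_one h2unit⟩
    exact hfin.orderOf_pos
  have hpdvd : p ∣ 2 ^ d - 1 := by
    have h2 : (2 : ZMod p) ^ d = 1 := pow_orderOf_eq_one _
    rw [← ZMod.natCast_eq_zero_iff]
    rw [Nat.cast_sub (Nat.one_le_two_pow), Nat.cast_pow, Nat.cast_ofNat, Nat.cast_one,
      sub_eq_zero, h2]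
  have hμ2d : (AdjoinRoot.root q) ^ 2 ^ d = (AdjoinRoot.root q) := by
    obtain ⟨k, hk⟩ := hpdvd
    have h1 : 2 ^ d = p * k + 1 := by have := Nat.one_le_two_pow (n := d); omega
    rw [h1, pow_succ, pow_mul, hμp, one_pow, one_mul]
  haveI : CharP (AdjoinRoot q) 2 := charP_of_injective_algebraMap (algebraMap (ZMod 2) (AdjoinRoot q)).injective 2
  set F := iterateFrobenius (AdjoinRoot q) 2 d with hF
  have hFdef : ∀ x : (AdjoinRoot q), F x = x ^ 2 ^ d := fun x => iterateFrobenius_def 2 d x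
  have halg : ∀ c : ZMod 2, F (algebraMap (ZMod 2) (AdjoinRoot q) c) = algebraMap (ZMod 2) (AdjoinRoot q) c := by
    intro c
    rw [hFdef, ← map_pow, zmod2_pow_two_pow]
  let Falg : (AdjoinRoot q) →ₐ[ZMod 2] (AdjoinRoot q) := AlgHom.mk' F (fun c x => by
    rw [Algebra.smul_def, map_mul, halg, Algebra.smul_def])
  have hFall : ∀ x : (AdjoinRoot q), x ^ 2 ^ d = x := by
    have htop : AlgHom.equalizer Falg (AlgHom.id (ZMod 2) (AdjoinRoot q)) = ⊤ := by
      rw [eq_top_iff, ← AdjoinRoot.adjoinRoot_eq_top (f := q)]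
      apply Algebra.adjoin_le
      rintro x hx
      rw [Set.mem_singleton_iff] at hx
      subst hx
      show F (AdjoinRoot.root q) = (AdjoinRoot.root q)
      rw [hFdef, hμ2d]
    intro x
    have hx : x ∈ AlgHom.equalizer Falg (AlgHom.id (ZMod 2) (AdjoinRoot q)) := htop ▸ trivial
    have : F x = x := hx
    rwa [hFdef] at this
  have hDled : D ≤ d := by
    set P : (AdjoinRoot q)[X] := X ^ 2 ^ d - X with hP
    have hdegP : P.degree = (2 ^ d : ℕ) := by
      rw [hP]
      rw [Polynomial.degree_sub_eq_left_of_degree_lt]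
      · exact Polynomial.degree_X_pow _
      · rw [Polynomial.degree_X_pow, Polynomial.degree_X]
        exact_mod_cast Nat.one_lt_two_pow_iff.mpr hdpos.ne'
    have hP0 : P ≠ 0 := fun h => by
      rw [h, Polynomial.degree_zero] at hdegP
      exact WithBot.bot_ne_coe hdegP
    have hsub : Finset.univ ⊆ P.roots.toFinset := by
      intro x _
      rw [Multiset.mem_toFinset, Polynomial.mem_roots hP0]
      simp [hP, Polynomial.IsRoot, hFall x]
    have hcard2 : Fintype.card (AdjoinRoot q) ≤ 2 ^ d := by
      calc Fintype.card (AdjoinRoot q) = Finset.univ.card := rfl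
        _ ≤ P.roots.toFinset.card := Finset.card_le_card hsub
        _ ≤ Multiset.card P.roots := Multiset.toFinset_card_le _
        _ ≤ P.natDegree := Polynomial.card_roots' P
        _ = 2 ^ d := Polynomial.natDegree_eq_of_degree_eq_some hdegP
    rw [hcardL] at hcard2
    exact (Nat.pow_le_pow_iff_right (le_refl 2)).mp hcard2
  exact Nat.le_antisymm hDled (Nat.le_of_dvd hDpos hdvdD)

lemma zmod2_ne_zero {a : ZMod 2} (h : a ≠ 0) : a = 1 := by
  revert h
  revert a
  decide

lemma Phi_not_unit : ¬ IsUnit (Phi p) := by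
  have hp : p.Prime := Fact.out
  apply Polynomial.not_isUnit_of_natDegree_pos
  rw [Phi_natDegree]
  have := hp.two_le
  omega

lemma Phi_irreducible (hodd : Odd p) (hord : orderOf (2 : ZMod p) = p - 1) :
    Irreducible (Phi p) := by
  obtain ⟨q, hmonic, hirr, hdvd⟩ := (Phi p).exists_monic_irreducible_factor (Phi_not_unit p)
  have hdeg : q.natDegree = p - 1 := by rw [factor_deg p hodd q hirr hdvd, hord]
  obtain ⟨c, hc⟩ := hdvd
  have hq0 : q ≠ 0 := hirr.ne_zero
  have hc0 : c ≠ 0 := by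
    intro h
    rw [h, mul_zero] at hc
    exact Phi_ne_zero p hc
  have hcdeg : c.natDegree = 0 := by
    have := congrArg Polynomial.natDegree hc
    rw [Phi_natDegree, Polynomial.natDegree_mul hq0 hc0, hdeg] at this
    omega
  have hcC : c = Polynomial.C (c.coeff 0) := Polynomial.eq_C_of_natDegree_eq_zero hcdeg
  have hcoeff : c.coeff 0 ≠ 0 := by
    intro h
    rw [h, map_zero] at hcC
    exact hc0 hcC
  have hc1 : c = 1 := by
    rw [hcC, zmod2_ne_zero hcoeff, map_one]
  rw [hc, hc1, mul_one]
  exact hirr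

lemma phi_Xp_sub_one : phi p (X ^ p - 1) = 0 := by
  rw [map_sub, map_one, map_pow, phi, Polynomial.aeval_X, gp_pow_p, sub_self]

lemma eps_phi (u : (ZMod 2)[X]) : eps p (phi p u) = u.eval 1 := by
  rw [phi, ← Polynomial.aeval_algHom_apply]
  rw [show (eps p) (gp p) = 1 from eps_of p _]
  rw [show (Polynomial.aeval (1 : ZMod 2)) u = Polynomial.eval 1 u from by
    rw [Polynomial.aeval_def, Polynomial.eval, Polynomial.eval₂_eq_eval_map]
    simp]

lemma forward (hodd : Odd p) (hord : orderOf (2 : ZMod p) = p - 1)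
    (t : Ap p) (ht : t ≠ Np p) (haug : eps p t ≠ 0) : IsUnit t := by
  have hp : p.Prime := Fact.out
  by_contra hnu
  haveI : NeZero p := ⟨hp.pos.ne'⟩
  haveI : Finite (Ap p) :=
    Finite.of_injective (fun f : Ap p => ⇑f.coeff)
      (fun a b h => MonoidAlgebra.ext (Finsupp.ext fun g => congrFun h g))
  -- t is a zero divisor
  obtain ⟨s, hs0, hts⟩ : ∃ s : Ap p, s ≠ 0 ∧ t * s = 0 := by
    have hninj : ¬ Function.Injective (fun s : Ap p => t * s) := by
      intro hinj
      obtain ⟨s, hs⟩ := Finite.surjective_of_injective hinj 1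
      exact hnu (IsUnit.of_mul_eq_one (a := t) s hs)
    obtain ⟨s₁, s₂, he, hne⟩ := Function.not_injective_iff.mp hninj
    exact ⟨s₁ - s₂, sub_ne_zero.mpr hne, by simp only [mul_sub, he, sub_self]⟩
  obtain ⟨u, hu, hut⟩ := phi_surj p t
  obtain ⟨v, hv, hvs⟩ := phi_surj p s
  have hv0 : v ≠ 0 := fun h => hs0 (by rw [← hvs, h, map_zero])
  have hdvd : (X ^ p - 1 : (ZMod 2)[X]) ∣ u * v := by
    apply phi_ker
    rw [map_mul, hut, hvs, hts]
  rw [← Phi_mul_X_sub_one] at hdvd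
  have hXirr : Irreducible (X - 1 : (ZMod 2)[X]) := by
    simpa using Polynomial.irreducible_X_sub_C (1 : ZMod 2)
  have hXprime : Prime (X - 1 : (ZMod 2)[X]) :=
    (UniqueFactorizationMonoid.irreducible_iff_prime).mp hXirr
  have hPhiPrime : Prime (Phi p) :=
    (UniqueFactorizationMonoid.irreducible_iff_prime).mp (Phi_irreducible p hodd hord)
  have hu1 : u.eval 1 = 1 := by
    apply zmod2_ne_zero
    rw [← eps_phi p u, hut]
    exact haug
  have hX1u : ¬ (X - 1 : (ZMod 2)[X]) ∣ u := by
    intro h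
    rw [show (X - 1 : (ZMod 2)[X]) = X - Polynomial.C 1 by simp] at h
    have := (Polynomial.dvd_iff_isRoot).mp h
    rw [Polynomial.IsRoot, hu1] at this
    exact one_ne_zero this
  have hXPhicop : IsCoprime (X - 1 : (ZMod 2)[X]) (Phi p) := by
    rw [hXirr.coprime_iff_not_dvd]
    intro h
    rw [show (X - 1 : (ZMod 2)[X]) = X - Polynomial.C 1 by simp] at h
    have := (Polynomial.dvd_iff_isRoot).mp h
    rw [Polynomial.IsRoot, Phi_eval_one p hodd] at this
    exact one_ne_zero this
  -- X - 1 divides v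
  have hX1v : (X - 1 : (ZMod 2)[X]) ∣ v := by
    rcases hXprime.dvd_mul.mp (dvd_of_mul_left_dvd hdvd ..) with h | h
    · exact absurd h hX1u
    · exact h
  rcases hPhiPrime.dvd_mul.mp (dvd_of_mul_right_dvd hdvd ..) with h | h
  · -- Phi ∣ u : t is a multiple of N
    obtain ⟨w, hw⟩ := h
    have : t = eps p (phi p w) • Np p := by
      rw [← hut, hw, map_mul, phi_Phi, Np_mul]
    rcases eq_or_ne (eps p (phi p w)) 0 with h0 | h0
    · rw [h0, zero_smul] at this
      rw [this] at haug
      simp at haug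
    · rw [zmod2_ne_zero h0, one_smul] at this
      exact ht this
  · -- Phi ∣ v : X^p - 1 ∣ v, degree contradiction
    have hdvd2 : (Phi p) * (X - 1) ∣ v := (hXPhicop.symm.mul_dvd h hX1v)
    rw [Phi_mul_X_sub_one] at hdvd2
    have := Polynomial.natDegree_le_of_dvd hdvd2 hv0
    rw [show ((X : (ZMod 2)[X]) ^ p - 1) = X ^ p - Polynomial.C 1 by simp,
      Polynomial.natDegree_X_pow_sub_C] at this
    omega

lemma backward (hodd : Odd p)
    (h : ∀ t : Ap p, t ≠ Np p → eps p t ≠ 0 → IsUnit t) :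
    orderOf (2 : ZMod p) = p - 1 := by
  have hp : p.Prime := Fact.out
  have hp2 : p ≠ 2 := by rintro rfl; exact (by decide : ¬ Odd 2) hodd
  have hp3 : 3 ≤ p := by have := hp.two_le; omega
  by_contra hne
  set d := orderOf (2 : ZMod p) with hd
  -- d ∣ p - 1, d < p - 1, 0 < d
  have h2unit : (2 : ZMod p) ≠ 0 := by
    intro h0
    have h2 : ((2 : ℕ) : ZMod p) = 0 := by exact_mod_cast h0
    have hdd := (ZMod.natCast_eq_zero_iff 2 p).mp h2
    have hle := Nat.le_of_dvd (by norm_num) hdd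
    omega
  have hddvd : d ∣ p - 1 :=
    orderOf_dvd_of_pow_eq_one (ZMod.pow_card_sub_one_eq_one h2unit)
  have hdpos : 0 < d := by
    have hfin : IsOfFinOrder (2 : ZMod p) :=
      isOfFinOrder_iff_pow_eq_one.mpr ⟨p - 1, by omega, ZMod.pow_card_sub_one_eq_one h2unit⟩
    exact hfin.orderOf_pos
  have hdlt : d < p - 1 := lt_of_le_of_ne (Nat.le_of_dvd (by omega) hddvd) hne
  -- get a nontrivial factorization Phi = q * r
  obtain ⟨q, hmonic, hirr, hdvd⟩ := (Phi p).exists_monic_irreducible_factor (Phi_not_unit p)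
  have hdeg : q.natDegree = d := factor_deg p hodd q hirr hdvd
  obtain ⟨r, hr⟩ := hdvd
  have hq0 : q ≠ 0 := hirr.ne_zero
  have hr0 : r ≠ 0 := by
    intro h0
    rw [h0, mul_zero] at hr
    exact Phi_ne_zero p hr
  have hrdeg : r.natDegree = (p - 1) - d := by
    have := congrArg Polynomial.natDegree hr
    rw [Phi_natDegree, Polynomial.natDegree_mul hq0 hr0, hdeg] at this
    omega
  have hX0 : (X - 1 : (ZMod 2)[X]) ≠ 0 := by
    have : (X - 1 : (ZMod 2)[X]) = X - Polynomial.C 1 := by simp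
    rw [this]
    exact Polynomial.X_sub_C_ne_zero (1 : ZMod 2)
  have hXdeg : (X - 1 : (ZMod 2)[X]).natDegree = 1 := by
    rw [show (X - 1 : (ZMod 2)[X]) = X - Polynomial.C 1 by simp]
    exact Polynomial.natDegree_X_sub_C 1
  -- the elements a and b
  set a := phi p ((X - 1) * q) with ha
  set b := phi p ((X - 1) * r) with hb
  have ha0 : a ≠ 0 := by
    intro h0
    have := phi_inj_small p _ ?_ h0
    · exact (mul_ne_zero hX0 hq0) this
    · rw [Polynomial.natDegree_mul hX0 hq0, hXdeg, hdeg]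
      omega
  have hb0 : b ≠ 0 := by
    intro h0
    have := phi_inj_small p _ ?_ h0
    · exact (mul_ne_zero hX0 hr0) this
    · rw [Polynomial.natDegree_mul hX0 hr0, hXdeg, hrdeg]
      omega
  have hab : a * b = 0 := by
    rw [ha, hb, ← map_mul]
    have hcalc : ((X : (ZMod 2)[X]) - 1) * q * ((X - 1) * r) = (X ^ p - 1) * (X - 1) := by
      rw [← Phi_mul_X_sub_one, hr]
      ring
    rw [hcalc, map_mul, phi_Xp_sub_one p, zero_mul]
  -- the nonunit counterexample
  set t := Np p + a with htdef
  have htN : t ≠ Np p := by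
    rw [htdef]
    intro h0
    exact ha0 (by simpa using h0)
  have hteps : eps p t ≠ 0 := by
    rw [htdef, map_add]
    rw [show eps p (Np p) = 1 from by
      rw [← phi_Phi, eps_phi, Phi_eval_one p hodd]]
    rw [ha, eps_phi]
    simp
  have hunit := h t htN hteps
  have htb : t * b = 0 := by
    rw [htdef, add_mul, hab, add_zero, Np_mul, hb, eps_phi]
    simp
  obtain ⟨w, hw⟩ := hunit.exists_left_inv
  have : b = 0 := by
    calc b = (w * t) * b := by rw [hw, one_mul]
    _ = w * (t * b) := by ring
    _ = 0 := by rw [htb, mul_zero]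
  exact hb0 this

theorem stmt_10 (p : ℕ) [Fact p.Prime] (hodd : Odd p) :
    orderOf (2 : ZMod p) = p - 1 ↔
      ∀ t : MonoidAlgebra (ZMod 2) (Multiplicative (ZMod p)),
        t ≠ (∑ g : Multiplicative (ZMod p),
              MonoidAlgebra.of (ZMod 2) (Multiplicative (ZMod p)) g) →
        (t.coeff.sum fun _ a => a) ≠ 0 → IsUnit t := by
  constructor
  · intro hord t ht haug
    exact forward p hodd hord t ht (by rwa [eps_eq])
  · intro h
    exact backward p hodd (fun t htN hte => h t htN (by rwa [eps_eq] at hte))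
end

section
/- Let p be an odd prime. The number of units u in F_2[C_p] satisfying u^p = 1 and u ≠ 1 equals p^{(p-1)/d} - 1, where d is the multiplicative order of 2 mod p. Consequently, 2 is a primitive root mod p if and only if the only units of order p in F_2[C_p] are the non-identity elements of C_p. -/
open Polynomial UniqueFactorizationMonoid

section Stmt11Aux

lemma count_field {K : Type*} [Field K] [Fintype K] {p : ℕ} (hp : p.Prime) :
    Nat.card {x : K // x ^ p = 1} = if p ∣ Nat.card Kˣ then p else 1 := by
  classical
  have hp0 : 0 < p := hp.pos
  haveI : Fact p.Prime := ⟨hp⟩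
  have e : {x : K // x ^ p = 1} ≃ {u : Kˣ // u ^ p = 1} := by
    refine ⟨fun x => ⟨Units.ofPowEqOne x.1 p x.2 hp0.ne', Units.ext (by
      simp [Units.val_pow_eq_pow_val, Units.val_ofPowEqOne, x.2])⟩,
      fun u => ⟨(u.1 : K), by rw [← Units.val_pow_eq_pow_val]; norm_cast; rw [u.2]; rfl⟩,
      fun x => Subtype.ext (by simp [Units.val_ofPowEqOne]),
      fun u => Subtype.ext (Units.ext (by simp [Units.val_ofPowEqOne]))⟩
  rw [Nat.card_congr e]
  by_cases h : p ∣ Nat.card Kˣ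
  · rw [if_pos h]
    obtain ⟨g, hg⟩ := exists_prime_orderOf_dvd_card (G := Kˣ) p
      (by classical rwa [Nat.card_eq_fintype_card] at h)
    have hle : Nat.card {u : Kˣ // u ^ p = 1} ≤ p := by
      rw [Nat.card_eq_fintype_card, Fintype.card_subtype]
      exact IsCyclic.card_pow_eq_one_le hp0
    have hge : p ≤ Nat.card {u : Kˣ // u ^ p = 1} := by
      have : Function.Injective (fun z : Subgroup.zpowers g => (⟨z.1, by
          obtain ⟨k, hk⟩ := z.2
          simp only [← hk, ← zpow_natCast, ← zpow_mul, mul_comm (k:ℤ)]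
          rw [zpow_mul]
          norm_cast
          rw [← hg, pow_orderOf_eq_one, one_zpow]⟩ : {u : Kˣ // u ^ p = 1})) := by
        intro a b hab
        exact Subtype.ext (congrArg Subtype.val hab : _)
      have := Nat.card_le_card_of_injective _ this
      rwa [Nat.card_zpowers, hg] at this
    omega
  · rw [if_neg h]
    have huniq : ∀ u : Kˣ, u ^ p = 1 → u = 1 := by
      intro u hu
      have h1 : orderOf u ∣ p := orderOf_dvd_of_pow_eq_one hu
      rcases (Nat.Prime.eq_one_or_self_of_dvd hp _ h1) with h2 | h2
      · exact orderOf_eq_one_iff.mp h2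
      · exact absurd (h2 ▸ orderOf_dvd_natCard u) h
    have : Unique {u : Kˣ // u ^ p = 1} :=
      ⟨⟨⟨1, one_pow p⟩⟩, fun u => Subtype.ext (huniq u.1 u.2)⟩
    simp [Nat.card_unique]

lemma two_ne_zero'' {p : ℕ} [hfp : Fact p.Prime] (hodd : Odd p) : (2 : ZMod p) ≠ 0 := by
  have hp2 : p ≠ 2 := by rintro rfl; simp [Nat.odd_iff] at hodd
  intro h
  have h2 : ((2 : ℕ) : ZMod p) = 0 := by exact_mod_cast h
  rw [ZMod.natCast_eq_zero_iff] at h2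
  exact hp2 ((Nat.prime_dvd_prime_iff_eq hfp.out Nat.prime_two).mp h2)

lemma d_pos {p : ℕ} [hfp : Fact p.Prime] (hodd : Odd p) : 0 < orderOf (2 : ZMod p) := by
  have hpow : (2 : ZMod p) ^ (p - 1) = 1 := ZMod.pow_card_sub_one_eq_one (two_ne_zero'' hodd)
  have h2 : 2 ≤ p := hfp.out.two_le
  exact (isOfFinOrder_iff_pow_eq_one.mpr ⟨p - 1, by omega, hpow⟩).orderOf_pos

lemma d_dvd {p : ℕ} [hfp : Fact p.Prime] (hodd : Odd p) : orderOf (2 : ZMod p) ∣ p - 1 :=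
  orderOf_dvd_of_pow_eq_one (ZMod.pow_card_sub_one_eq_one (two_ne_zero'' hodd))

lemma p_dvd_iff' {p : ℕ} [hfp : Fact p.Prime] (n : ℕ) :
    p ∣ 2 ^ n - 1 ↔ orderOf (2 : ZMod p) ∣ n := by
  rw [orderOf_dvd_iff_pow_eq_one, ← ZMod.natCast_eq_zero_iff]
  have h1 : (1 : ℕ) ≤ 2 ^ n := Nat.one_le_two_pow
  rw [Nat.cast_sub h1]
  push_cast
  rw [sub_eq_zero, eq_comm]

lemma card_pow_congr {A B : Type*} [Monoid A] [Monoid B] (e : A ≃* B) (n : ℕ) :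
    Nat.card {x : A // x ^ n = 1} = Nat.card {x : B // x ^ n = 1} :=
  Nat.card_congr (e.toEquiv.subtypeEquiv (fun a => by
    rw [show e.toEquiv a = e a from rfl, ← map_pow, MulEquiv.map_eq_one_iff]))

lemma card_ne_one {G : Type*} [Finite G] (a : G) :
    Nat.card {x : G // x ≠ a} = Nat.card G - 1 := by
  have e : {x : G // x ≠ a} ≃ ((Set.univ \ {a} : Set G)) :=
    Equiv.subtypeEquivRight (by simp)
  rw [Nat.card_congr e, Nat.card_coe_set_eq,
    Set.ncard_diff_singleton_of_mem (Set.mem_univ a), Set.ncard_univ]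
lemma factor_degree {p : ℕ} [hfp : Fact p.Prime] (hodd : Odd p) (hdp : 0 < orderOf (2 : ZMod p))
    {f : (ZMod 2)[X]}
    (hirr : Irreducible f) (hmon : f.Monic) (hdvd : f ∣ (X ^ p - 1)) (hne : f ≠ X - C 1) :
    f.natDegree = orderOf (2 : ZMod p) := by
  classical
  set d := orderOf (2 : ZMod p) with hd
  set n := f.natDegree with hn
  have hn0 : 0 < n := hirr.natDegree_pos
  haveI : Fact (Irreducible f) := ⟨hirr⟩
  letI : Fintype (AdjoinRoot f) := Module.fintypeOfFintype (AdjoinRoot.powerBasis' hmon).basis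
  have hcardK : Fintype.card (AdjoinRoot f) = 2 ^ n := by
    rw [Module.card_fintype (AdjoinRoot.powerBasis' hmon).basis]
    simp [AdjoinRoot.powerBasis', ZMod.card]
    exact (Fintype.card_congr' rfl).trans (Fintype.card_fin _)
  have hα : (AdjoinRoot.root f) ^ p = 1 := by
    have h0 : AdjoinRoot.mk f (X ^ p - 1) = 0 := AdjoinRoot.mk_eq_zero.mpr hdvd
    rwa [map_sub, map_pow, AdjoinRoot.mk_X, map_one, sub_eq_zero] at h0
  have hα1 : (AdjoinRoot.root f) ≠ 1 := by
    intro h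
    have h0 : AdjoinRoot.mk f (X - C 1) = 0 := by
      rw [map_sub, AdjoinRoot.mk_X, h]; simp
    rw [AdjoinRoot.mk_eq_zero] at h0
    exact hne (eq_of_monic_of_associated hmon (monic_X_sub_C 1)
      (hirr.associated_of_dvd (irreducible_X_sub_C 1) h0))
  have hp0 : p ≠ 0 := hfp.out.pos.ne'
  set αu : (AdjoinRoot f)ˣ := Units.ofPowEqOne _ p hα hp0 with hαu
  have hord : orderOf αu = p := by
    apply orderOf_eq_prime (Units.pow_ofPowEqOne _ _)
    intro h
    apply hα1
    have := congrArg Units.val h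
    simpa [Units.val_ofPowEqOne] using this
  have hcardU : Fintype.card (AdjoinRoot f)ˣ = 2 ^ n - 1 := by
    rw [Fintype.card_units, hcardK]
  have hdn : d ∣ n := by
    rw [← p_dvd_iff']
    rw [← hord] at *
    have := orderOf_dvd_card (x := αu)
    rwa [hcardU] at this
  -- every element is fixed by x ↦ x^(2^d)
  have hroot2d : (AdjoinRoot.root f) ^ (2 ^ d) = AdjoinRoot.root f := by
    have hpd : p ∣ 2 ^ d - 1 := (p_dvd_iff' d).mpr dvd_rfl
    obtain ⟨t, ht⟩ := hpd
    have h1 : (1:ℕ) ≤ 2 ^ d := Nat.one_le_two_pow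
    have h2 : 2 ^ d = p * t + 1 := by omega
    rw [h2, pow_add, pow_mul, hα, one_pow, pow_one, one_mul]
  have hall : ∀ x : AdjoinRoot f, x ^ (2 ^ d) = x := by
    intro x
    obtain ⟨g, rfl⟩ := AdjoinRoot.mk_surjective x
    have hexp : g ^ 2 ^ d = expand (ZMod 2) (2 ^ d) g := by
      have hmap := map_iterateFrobenius_expand (R := ZMod 2) 2 g d
      rw [show (iterateFrobenius (ZMod 2) 2 d) = RingHom.id (ZMod 2) from RingHom.ext_zmod _ _,
        Polynomial.map_id] at hmap
      exact hmap.symm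
    calc (AdjoinRoot.mk f g) ^ 2 ^ d = AdjoinRoot.mk f (g ^ 2 ^ d) := (map_pow _ _ _).symm
      _ = aeval (AdjoinRoot.root f) (expand (ZMod 2) (2 ^ d) g) := by
          rw [hexp.symm, AdjoinRoot.aeval_eq]
      _ = aeval ((AdjoinRoot.root f) ^ 2 ^ d) g := expand_aeval _ _ _
      _ = AdjoinRoot.mk f g := by rw [hroot2d, AdjoinRoot.aeval_eq]
  have hd0 : d ≠ 0 := hdp.ne'
  have hle : Fintype.card (AdjoinRoot f) ≤ 2 ^ d := by
    have hne0 : (X ^ 2 ^ d - X : (AdjoinRoot f)[X]) ≠ 0 :=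
      FiniteField.X_pow_card_pow_sub_X_ne_zero _ hd0 one_lt_two
    have hsub : (Finset.univ.val : Multiset (AdjoinRoot f)) ≤ (X ^ 2 ^ d - X : (AdjoinRoot f)[X]).roots := by
      rw [Multiset.le_iff_subset Finset.univ.nodup]
      intro x _
      rw [mem_roots hne0]
      simp [hall x]
    have := Multiset.card_le_card hsub
    calc Fintype.card (AdjoinRoot f) = Multiset.card Finset.univ.val := rfl
      _ ≤ Multiset.card (X ^ 2 ^ d - X : (AdjoinRoot f)[X]).roots := this
      _ ≤ (X ^ 2 ^ d - X : (AdjoinRoot f)[X]).natDegree := (X ^ 2 ^ d - X : (AdjoinRoot f)[X]).card_roots'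
      _ = 2 ^ d := FiniteField.X_pow_card_pow_sub_X_natDegree_eq _ hd0 one_lt_two
  have hnd : n ≤ d := by
    rw [hcardK] at hle
    exact (Nat.pow_le_pow_iff_right one_lt_two).mp hle
  have : d ≤ n := Nat.le_of_dvd hn0 hdn
  omega
noncomputable def riso (p : ℕ) [hfp : Fact p.Prime] :
    AdjoinRoot (X ^ p - 1 : (ZMod 2)[X]) ≃ₐ[ZMod 2]
      MonoidAlgebra (ZMod 2) (Multiplicative (ZMod p)) := by
  haveI : NeZero p := ⟨hfp.out.pos.ne'⟩
  set G := Multiplicative (ZMod p)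
  set R := MonoidAlgebra (ZMod 2) G with hR
  set q : (ZMod 2)[X] := X ^ p - 1 with hq
  set g0 : R := MonoidAlgebra.of (ZMod 2) G (Multiplicative.ofAdd 1) with hg0def
  have hof_pow : ∀ k : ℕ, g0 ^ k = MonoidAlgebra.of (ZMod 2) G (Multiplicative.ofAdd (k : ZMod p)) := by
    intro k
    rw [hg0def, ← map_pow]
    congr 1
    rw [← ofAdd_nsmul]
    congr 1
    simp
  have hg0 : g0 ^ p = 1 := by
    rw [hof_pow p, ZMod.natCast_self]
    simp
    exact MonoidAlgebra.one_def.symm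
  set x : AdjoinRoot q := AdjoinRoot.root q with hxdef
  have hx : x ^ p = 1 := by
    have h0 : AdjoinRoot.mk q (X ^ p - 1) = 0 := AdjoinRoot.mk_eq_zero.mpr dvd_rfl
    rwa [map_sub, map_pow, AdjoinRoot.mk_X, map_one, sub_eq_zero] at h0
  have hxmod : ∀ i : ℕ, x ^ (i % p) = x ^ i := by
    intro i
    conv_rhs => rw [← Nat.div_add_mod i p]
    rw [pow_add, pow_mul, hx, one_pow, one_mul]
  set Γ : G →* AdjoinRoot q :=
    { toFun := fun m => x ^ (Multiplicative.toAdd m).val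
      map_one' := by simp
      map_mul' := fun a b => by
        show x ^ (Multiplicative.toAdd (a * b)).val
          = x ^ (Multiplicative.toAdd a).val * x ^ (Multiplicative.toAdd b).val
        rw [toAdd_mul, ZMod.val_add, hxmod, pow_add] } with hΓdef
  have haev : aeval g0 q = 0 := by rw [hq]; simp [hg0]
  set φ : AdjoinRoot q →ₐ[ZMod 2] R := AdjoinRoot.liftAlgHom q (Algebra.ofId _ _) g0 haev with hφdef
  set ψ : R →ₐ[ZMod 2] AdjoinRoot q := (MonoidAlgebra.lift (ZMod 2) (AdjoinRoot q) G) Γ with hψdef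
  have hφx : φ x = g0 := by rw [hφdef, hxdef]; exact AdjoinRoot.liftAlgHom_root _ _ _ _
  have hψof : ∀ m : G, ψ (MonoidAlgebra.of (ZMod 2) G m) = x ^ (Multiplicative.toAdd m).val := by
    intro m
    rw [hψdef, MonoidAlgebra.lift_of]
    rfl
  refine AlgEquiv.ofAlgHom φ ψ ?_ ?_
  · apply MonoidAlgebra.algHom_ext
    intro m
    show (φ.comp ψ) (MonoidAlgebra.of (ZMod 2) G m) = _
    rw [AlgHom.comp_apply, hψof, map_pow, hφx, hof_pow, ZMod.natCast_zmod_val]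
    rfl
    exact Subsingleton.elim _ _
  · apply AdjoinRoot.algHom_ext
    rw [AlgHom.comp_apply, hφx]
    show ψ (MonoidAlgebra.of (ZMod 2) G (Multiplicative.ofAdd 1)) = _
    rw [hψof]
    show x ^ (1 : ZMod p).val = _
    haveI : Fact (1 < p) := ⟨hfp.out.one_lt⟩
    rw [ZMod.val_one p]
    exact pow_one x
lemma factor_count {p : ℕ} [hfp : Fact p.Prime] (hodd : Odd p) {f : (ZMod 2)[X]}
    (hirr : Irreducible f) (hmon : f.Monic) (hdvd : f ∣ (X ^ p - 1)) :
    Nat.card {x : AdjoinRoot f // x ^ p = 1} = if f = X - C 1 then 1 else p := by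
  classical
  haveI : Fact (Irreducible f) := ⟨hirr⟩
  letI : Fintype (AdjoinRoot f) := Module.fintypeOfFintype (AdjoinRoot.powerBasis' hmon).basis
  have hcardK : Fintype.card (AdjoinRoot f) = 2 ^ f.natDegree := by
    rw [Module.card_fintype (AdjoinRoot.powerBasis' hmon).basis]
    simp [AdjoinRoot.powerBasis', ZMod.card]
    exact (Fintype.card_congr' rfl).trans (Fintype.card_fin _)
  have hcardU : Nat.card (AdjoinRoot f)ˣ = 2 ^ f.natDegree - 1 := by
    rw [Nat.card_units, Nat.card_eq_fintype_card, hcardK]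
  rw [count_field hfp.out, hcardU]
  by_cases hf1 : f = X - C 1
  · have h1 : ¬ p ∣ 2 ^ (X - C 1 : (ZMod 2)[X]).natDegree - 1 := by
      rw [natDegree_X_sub_C, pow_one]
      simp only [Nat.reduceSub, Nat.dvd_one]
      exact hfp.out.one_lt.ne'
    rw [if_pos hf1, hf1, if_neg h1]
  · have h2 : p ∣ 2 ^ f.natDegree - 1 := by
      rw [factor_degree hodd (d_pos hodd) hirr hmon hdvd hf1]
      exact (p_dvd_iff' _).mpr dvd_rfl
    rw [if_neg hf1, if_pos h2]

lemma main_count (p : ℕ) [hfp : Fact p.Prime] (hodd : Odd p) :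
    Nat.card {x : MonoidAlgebra (ZMod 2) (Multiplicative (ZMod p)) // x ^ p = 1} =
      p ^ ((p - 1) / orderOf (2 : ZMod p)) := by
  classical
  have hiso : Nat.card {x : MonoidAlgebra (ZMod 2) (Multiplicative (ZMod p)) // x ^ p = 1}
      = Nat.card {x : AdjoinRoot (X ^ p - 1 : (ZMod 2)[X]) // x ^ p = 1} :=
    card_pow_congr ((riso p).symm.toRingEquiv.toMulEquiv) p
  have hp0 : 0 < p := hfp.out.pos
  set d := orderOf (2 : ZMod p) with hd
  have hd0 : 0 < d := d_pos hodd
  set q : (ZMod 2)[X] := X ^ p - 1 with hq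
  have hqmon : q.Monic := by
    rw [hq, ← C_1]; exact monic_X_pow_sub_C 1 hp0.ne'
  have hqne : q ≠ 0 := hqmon.ne_zero
  have hqdeg : q.natDegree = p := by rw [hq, ← C_1]; exact natDegree_X_pow_sub_C
  have hsep : q.Separable := by
    rw [hq, ← C_1]
    refine separable_X_pow_sub_C 1 ?_ one_ne_zero
    rw [Ne, ZMod.natCast_eq_zero_iff]
    rw [Nat.odd_iff] at hodd
    omega
  have hsq : Squarefree q := hsep.squarefree
  set s : Finset ((ZMod 2)[X]) := (normalizedFactors q).toFinset with hs
  have hnodup : (normalizedFactors q).Nodup := (squarefree_iff_nodup_normalizedFactors hqne).mp hsq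
  have hsval : s.val = normalizedFactors q := Multiset.dedup_eq_self.mpr hnodup
  have hirr : ∀ f ∈ s, Irreducible f := fun f hf =>
    irreducible_of_normalized_factor f (Multiset.mem_toFinset.mp hf)
  have hmon : ∀ f ∈ s, f.Monic := by
    intro f hf
    have h1 := normalize_normalized_factor f (Multiset.mem_toFinset.mp hf)
    rw [← h1]
    exact monic_normalize (hirr f hf).ne_zero
  have hdvd : ∀ f ∈ s, f ∣ q := fun f hf =>
    dvd_of_mem_normalizedFactors (Multiset.mem_toFinset.mp hf)
  have hmon' : ∀ f ∈ normalizedFactors q, f.Monic := fun f hf =>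
    hmon f (Multiset.mem_toFinset.mpr hf)
  have hprod : ∏ f ∈ s, f = q := by
    rw [Finset.prod_eq_multiset_prod, hsval, Multiset.map_id']
    exact eq_of_monic_of_associated (monic_multiset_prod_of_monic _ _ (fun g hg => hmon' _ (Multiset.mem_map_of_mem _ hg)))
      hqmon (prod_normalizedFactors hqne)
  -- distinct elements of s are coprime
  have hcop : ∀ a b : {f // f ∈ s}, a ≠ b → IsCoprime a.1 b.1 := by
    intro a b hab
    refine (hirr a.1 a.2).coprime_iff_not_dvd.mpr (fun hdvd' => ?_)
    have h1 : a.1 = b.1 := eq_of_monic_of_associated (hmon a.1 a.2) (hmon b.1 b.2)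
      ((hirr a.1 a.2).associated_of_dvd (hirr b.1 b.2) hdvd')
    exact hab (Subtype.ext h1)
  -- CRT
  have hinf : (⨅ i : {f // f ∈ s}, Ideal.span {i.1}) = Ideal.span {q} := by
    rw [Ideal.iInf_span_singleton hcop]
    congr 1
    rw [Finset.prod_coe_sort s (fun f => f), hprod]
  have hcop' : Pairwise (Function.onFun IsCoprime fun i : {f // f ∈ s} => Ideal.span {i.1}) := by
    intro a b hab
    rw [Function.onFun, Ideal.isCoprime_span_singleton_iff]
    exact hcop a b hab
  have e2 : AdjoinRoot q ≃+* Π i : {f // f ∈ s}, AdjoinRoot i.1 :=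
    (Ideal.quotEquivOfEq hinf.symm).trans (Ideal.quotientInfRingEquivPiQuotient _ hcop')
  rw [hiso, card_pow_congr e2.toMulEquiv p]
  have hpi : Nat.card {x : Π i : {f // f ∈ s}, AdjoinRoot i.1 // x ^ p = 1}
      = ∏ i : {f // f ∈ s}, Nat.card {y : AdjoinRoot i.1 // y ^ p = 1} := by
    rw [← Nat.card_pi]
    apply Nat.card_congr
    exact (Equiv.subtypeEquivRight (fun x => by
      simp [funext_iff])).trans Equiv.subtypePiEquivPi
  rw [hpi]
  have hfc : ∀ i : {f // f ∈ s}, Nat.card {y : AdjoinRoot i.1 // y ^ p = 1}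
      = if i.1 = X - C 1 then 1 else p := fun i =>
    factor_count hodd (hirr i.1 i.2) (hmon i.1 i.2) (hdvd i.1 i.2)
  rw [Finset.prod_congr rfl (fun i _ => hfc i),
    Finset.prod_coe_sort s (fun f => if f = X - C 1 then 1 else p)]
  have hmem1 : (X - C 1 : (ZMod 2)[X]) ∈ s := by
    rw [hs, Multiset.mem_toFinset]
    have hdvd1 : (X - C 1 : (ZMod 2)[X]) ∣ q := dvd_iff_isRoot.mpr (by simp [hq])
    obtain ⟨g, hg, hass⟩ := exists_mem_normalizedFactors_of_dvd hqne (irreducible_X_sub_C 1) hdvd1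
    rwa [eq_of_monic_of_associated (monic_X_sub_C 1) (hmon' g hg) hass]
  rw [← Finset.mul_prod_erase s _ hmem1, if_pos rfl, one_mul]
  rw [Finset.prod_congr rfl (fun f hf => if_neg (Finset.ne_of_mem_erase hf)),
    Finset.prod_const]
  congr 1
  have hsum : ∑ f ∈ s, f.natDegree = p := by
    rw [← hqdeg]
    conv_rhs => rw [← hprod]
    rw [natDegree_prod _ _ (fun f hf => (hirr f hf).ne_zero)]
  have hsplit : (X - C 1 : (ZMod 2)[X]).natDegree
      + ∑ f ∈ s.erase (X - C 1), f.natDegree = ∑ f ∈ s, f.natDegree :=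
    Finset.add_sum_erase s _ hmem1
  have herased : ∑ f ∈ s.erase (X - C 1), f.natDegree = (s.erase (X - C 1)).card * d := by
    rw [Finset.sum_congr rfl (fun f hf => factor_degree hodd hd0
      (hirr f (Finset.mem_of_mem_erase hf)) (hmon f (Finset.mem_of_mem_erase hf))
      (hdvd f (Finset.mem_of_mem_erase hf)) (Finset.ne_of_mem_erase hf)),
      Finset.sum_const, smul_eq_mul]
  rw [natDegree_X_sub_C, herased, hsum] at hsplit
  have : p - 1 = (s.erase (X - C 1)).card * d := by omega
  rw [this, Nat.mul_div_cancel _ hd0]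
end Stmt11Aux

theorem stmt_11 (p : ℕ) [Fact p.Prime] (hodd : Odd p) :
    Nat.card {u : (MonoidAlgebra (ZMod 2) (Multiplicative (ZMod p)))ˣ // u ^ p = 1 ∧ u ≠ 1} =
      p ^ ((p - 1) / orderOf (2 : ZMod p)) - 1 ∧
    (orderOf (2 : ZMod p) = p - 1 ↔
      ∀ u : (MonoidAlgebra (ZMod 2) (Multiplicative (ZMod p)))ˣ, u ^ p = 1 → u ≠ 1 →
        ∃ g : Multiplicative (ZMod p), g ≠ 1 ∧
          (u : MonoidAlgebra (ZMod 2) (Multiplicative (ZMod p))) =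
            MonoidAlgebra.of (ZMod 2) (Multiplicative (ZMod p)) g) := by
  classical
  have hp : p.Prime := Fact.out
  haveI : NeZero p := ⟨hp.pos.ne'⟩
  have hp3 : 3 ≤ p := by
    rcases hp.two_le.lt_or_eq with h | h
    · omega
    · exfalso; rw [← h] at hodd; simp [Nat.odd_iff] at hodd
  set G := Multiplicative (ZMod p) with hG
  haveI : Finite (MonoidAlgebra (ZMod 2) G) :=
    Finite.of_equiv _ ((Finsupp.equivFunOnFinite (α := G) (M := ZMod 2)).symm.trans MonoidAlgebra.coeffEquiv.symm)
  set d := orderOf (2 : ZMod p) with hd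
  have hd0 : 0 < d := d_pos hodd
  have hddvd : d ∣ p - 1 := d_dvd hodd
  have hmain : Nat.card {x : MonoidAlgebra (ZMod 2) G // x ^ p = 1} = p ^ ((p - 1) / d) :=
    main_count p hodd
  -- bijection between units with u^p=1, u≠1 and ring elements with x^p=1, x≠1
  have e1 : {u : (MonoidAlgebra (ZMod 2) G)ˣ // u ^ p = 1 ∧ u ≠ 1} ≃
      {x : MonoidAlgebra (ZMod 2) G // x ^ p = 1 ∧ x ≠ 1} := by
    refine
      { toFun := fun u => ⟨u.1.1,
          by rw [← Units.val_pow_eq_pow_val, u.2.1, Units.val_one],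
          fun h => u.2.2 (Units.ext (by rw [h, Units.val_one]))⟩
        invFun := fun x => ⟨Units.ofPowEqOne x.1 p x.2.1 hp.pos.ne',
          Units.pow_ofPowEqOne _ _,
          fun h => x.2.2 (by
            rw [← Units.val_ofPowEqOne x.1 p x.2.1 hp.pos.ne', h, Units.val_one])⟩
        left_inv := fun u => Subtype.ext (Units.ext (by simp [Units.val_ofPowEqOne]))
        right_inv := fun x => Subtype.ext (by simp [Units.val_ofPowEqOne]) }
  have hcount1 : Nat.card {u : (MonoidAlgebra (ZMod 2) G)ˣ // u ^ p = 1 ∧ u ≠ 1} =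
      p ^ ((p - 1) / d) - 1 := by
    rw [Nat.card_congr e1]
    have e2 : {x : MonoidAlgebra (ZMod 2) G // x ^ p = 1 ∧ x ≠ 1} ≃
        (({x : MonoidAlgebra (ZMod 2) G | x ^ p = 1} \ {1}) : Set (MonoidAlgebra (ZMod 2) G)) :=
      Equiv.subtypeEquivRight (by intro x; simp [Set.mem_diff])
    have hset : ({x : MonoidAlgebra (ZMod 2) G | x ^ p = 1}).ncard = p ^ ((p - 1) / d) := by
      rw [← Nat.card_coe_set_eq]
      exact hmain
    rw [Nat.card_congr e2, Nat.card_coe_set_eq,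
      Set.ncard_diff_singleton_of_mem (show (1 : MonoidAlgebra (ZMod 2) G) ∈
        {x : MonoidAlgebra (ZMod 2) G | x ^ p = 1} from one_pow p), hset]
  refine ⟨hcount1, ?_⟩
  -- facts about group element units
  have hofpow : ∀ g : G, (MonoidAlgebra.of (ZMod 2) G g) ^ p = 1 := by
    intro g
    rw [← map_pow]
    have hg : g ^ p = 1 := by
      rw [← ofAdd_toAdd g, ← ofAdd_nsmul]
      simp [nsmul_eq_mul, ZMod.natCast_self]
    rw [hg, map_one]
  have hofinj : Function.Injective (MonoidAlgebra.of (ZMod 2) G) := MonoidAlgebra.of_injective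
  have hcardG : Nat.card {g : G // g ≠ 1} = p - 1 := by
    rw [card_ne_one (1 : G), Nat.card_congr (Multiplicative.toAdd (α := ZMod p)), Nat.card_zmod]
  constructor
  · -- d = p - 1 → every unit of order p comes from the group
    intro hdeq u hu1 hu2
    have hm1 : (p - 1) / d = 1 := by rw [← hdeq]; exact Nat.div_self hd0
    set T := {u : (MonoidAlgebra (ZMod 2) G)ˣ // u ^ p = 1 ∧ u ≠ 1} with hT
    have hcardT : Nat.card T = p - 1 := by
      rw [hT, hcount1, hm1, pow_one]
    set θ : {g : G // g ≠ 1} → T := fun g =>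
      ⟨Units.ofPowEqOne (MonoidAlgebra.of (ZMod 2) G g.1) p (hofpow g.1) hp.pos.ne',
        Units.ext (by simp [Units.val_pow_eq_pow_val, Units.val_ofPowEqOne, hofpow g.1]),
        fun h => g.2 (hofinj (by
          rw [← Units.val_ofPowEqOne (MonoidAlgebra.of (ZMod 2) G g.1) p (hofpow g.1) hp.pos.ne',
            h, Units.val_one, map_one]))⟩ with hθ
    have hθinj : Function.Injective θ := by
      intro a b hab
      have : (MonoidAlgebra.of (ZMod 2) G a.1) = (MonoidAlgebra.of (ZMod 2) G b.1) := by
        have h1 := congrArg (fun t : T => (t.1 : MonoidAlgebra (ZMod 2) G)) hab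
        simpa [hθ, Units.val_ofPowEqOne] using h1
      exact Subtype.ext (hofinj this)
    have hbij : Function.Bijective θ :=
      (Nat.bijective_iff_injective_and_card θ).mpr ⟨hθinj, by rw [hcardG, hcardT]⟩
    obtain ⟨g, hg⟩ := hbij.2 ⟨u, hu1, hu2⟩
    refine ⟨g.1, g.2, ?_⟩
    have := congrArg (fun t : T => (t.1 : MonoidAlgebra (ZMod 2) G)) hg
    simpa [hθ, Units.val_ofPowEqOne] using this.symm
  · -- conversely
    intro h
    have hinj2 : ∃ f : {u : (MonoidAlgebra (ZMod 2) G)ˣ // u ^ p = 1 ∧ u ≠ 1} → {g : G // g ≠ 1},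
        Function.Injective f := by
      refine ⟨fun u => ⟨Classical.choose (h u.1 u.2.1 u.2.2),
        (Classical.choose_spec (h u.1 u.2.1 u.2.2)).1⟩, ?_⟩
      intro a b hab
      have ha := (Classical.choose_spec (h a.1 a.2.1 a.2.2)).2
      have hb := (Classical.choose_spec (h b.1 b.2.1 b.2.2)).2
      apply Subtype.ext
      apply Units.ext
      rw [ha, hb]
      exact congrArg _ (congrArg Subtype.val hab)
    obtain ⟨f, hf⟩ := hinj2
    have hle := Nat.card_le_card_of_injective f hf
    rw [hcount1, hcardG] at hle
    set m := (p - 1) / d with hm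
    have hm1 : 1 ≤ m := by
      rw [hm]
      exact (Nat.one_le_div_iff hd0).mpr (Nat.le_of_dvd (by omega) hddvd)
    have hple : p ^ m ≤ p := by
      have hppos : 1 ≤ p ^ m := Nat.one_le_pow _ _ hp.pos
      omega
    have hmle : m ≤ 1 := by
      have h2 : p ^ m ≤ p ^ 1 := by rwa [pow_one]
      exact (Nat.pow_le_pow_iff_right hp.one_lt).mp h2
    have hmeq : m = 1 := le_antisymm hmle hm1
    have : d * m = p - 1 := by rw [hm]; exact Nat.mul_div_cancel' hddvd
    rw [hmeq, mul_one] at this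
    exact this
end

section
/- Let p be an odd prime and n a positive integer coprime to p. The unit x^n + 1 in F_2[x]/(Φ_p(x)) satisfies (x^n + 1)^p = 1 if and only if p is a Mersenne prime. -/
open Polynomial

namespace Stmt14

/-- Sum over `ZMod p` equals sum over `range p`. -/
lemma zmod_sum_range {p : ℕ} [NeZero p] {A : Type*} [AddCommMonoid A] (F : ZMod p → A) :
    ∑ t : ZMod p, F t = ∑ j ∈ Finset.range p, F (j : ZMod p) := by
  refine Finset.sum_nbij' (i := fun t => ZMod.val t) (j := fun j => (j : ZMod p))
    (fun a _ => Finset.mem_range.mpr (ZMod.val_lt a)) (fun a _ => Finset.mem_univ _)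
    (fun a _ => ZMod.natCast_rightInverse a) (fun a ha => ZMod.val_cast_of_lt (Finset.mem_range.mp ha))
    (fun a _ => by rw [ZMod.natCast_rightInverse a])

lemma sum_pow_reindex {p : ℕ} (hp : p.Prime) {A : Type*} [CommRing A] (x : A)
    (hx : x ^ p = 1) {n : ℕ} (hnp : n.Coprime p) :
    ∑ j ∈ Finset.range p, x ^ (n * j) = ∑ j ∈ Finset.range p, x ^ j := by
  haveI : NeZero p := ⟨hp.pos.ne'⟩
  haveI : Fact p.Prime := ⟨hp⟩
  set g : ZMod p → A := fun t => x ^ t.val with hg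
  have hmod : ∀ a : ℕ, x ^ a = x ^ (a % p) := fun a => pow_eq_pow_mod a hx
  have hcast : ∀ a : ℕ, g (a : ZMod p) = x ^ a := by
    intro a
    rw [hg]
    simp only []
    rw [ZMod.val_natCast, ← hmod]
  have hc : (n : ZMod p) ≠ 0 := by
    rw [Ne, ZMod.natCast_eq_zero_iff]
    exact (Nat.Prime.coprime_iff_not_dvd hp).mp hnp.symm
  calc ∑ j ∈ Finset.range p, x ^ (n * j)
      = ∑ j ∈ Finset.range p, g ((n : ZMod p) * (j : ZMod p)) := by
        refine Finset.sum_congr rfl fun j _ => ?_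
        rw [← Nat.cast_mul, hcast]
    _ = ∑ t : ZMod p, g ((n : ZMod p) * t) :=
        (zmod_sum_range (fun t => g ((n : ZMod p) * t))).symm
    _ = ∑ t : ZMod p, g t :=
        Fintype.sum_bijective _ (mulLeft_bijective₀ _ hc) _ _ (fun t => rfl)
    _ = ∑ j ∈ Finset.range p, x ^ j := by
        rw [zmod_sum_range g]
        exact Finset.sum_congr rfl fun j hj => by
          rw [hcast, hmod, Nat.mod_eq_of_lt (Finset.mem_range.mp hj)]

lemma geom_double {A : Type*} [CommRing A] (y : A) (q : ℕ) :
    (y + 1) * ∑ i ∈ Finset.range q, y ^ (2 * i) = ∑ j ∈ Finset.range (2 * q), y ^ j := by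
  induction q with
  | zero => simp
  | succ q ih =>
    rw [Finset.sum_range_succ, mul_add, ih, Nat.mul_succ, Finset.sum_range_succ,
      Finset.sum_range_succ]
    ring

/-- Mersenne implies the power is one. -/
lemma mers_dir (p : ℕ) (hp : p.Prime) (hodd : Odd p) (n : ℕ) (hn : 0 < n)
    (hnp : Nat.Coprime n p) (m : ℕ) (hm : p = 2 ^ m - 1) :
    (Ideal.Quotient.mk (Ideal.span {cyclotomic p (ZMod 2)}) (X ^ n + 1)) ^ p = 1 := by
  haveI : Fact p.Prime := ⟨hp⟩
  set I := Ideal.span {cyclotomic p (ZMod 2)} with hI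
  set mk := Ideal.Quotient.mk I with hmk
  have hΦ : mk (cyclotomic p (ZMod 2)) = 0 := by
    rw [Ideal.Quotient.eq_zero_iff_mem, hI]
    exact Ideal.mem_span_singleton_self _
  set x : (ZMod 2)[X] ⧸ I := mk X with hx
  have hxp : x ^ p = 1 := by
    rw [hx, ← map_pow, ← map_one mk, Ideal.Quotient.mk_eq_mk_iff_sub_mem, hI,
      Ideal.mem_span_singleton]
    exact cyclotomic.dvd_X_pow_sub_one p (ZMod 2)
  set y : (ZMod 2)[X] ⧸ I := x ^ n with hy
  have hyp : y ^ p = 1 := by rw [hy, ← pow_mul, mul_comm, pow_mul, hxp, one_pow]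
  have hu : mk (X ^ n + 1) = y + 1 := by rw [hy, hx, map_add, map_pow, map_one]
  have hsum : ∑ j ∈ Finset.range p, y ^ j = 0 := by
    have h1 : ∑ j ∈ Finset.range p, y ^ j = ∑ j ∈ Finset.range p, x ^ (n * j) := by
      refine Finset.sum_congr rfl fun j _ => ?_
      rw [hy, ← pow_mul]
    rw [h1, sum_pow_reindex hp x hxp hnp]
    have h2 : ∑ j ∈ Finset.range p, x ^ j = mk (∑ j ∈ Finset.range p, X ^ j) := by
      rw [map_sum]
      exact Finset.sum_congr rfl fun j _ => by rw [hx, map_pow]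
    rw [h2, ← cyclotomic_prime (ZMod 2) p, hΦ]
  -- inverse
  have h2m : 2 ^ m = p + 1 := by
    rw [hm, Nat.sub_add_cancel (Nat.one_le_two_pow)]
  have hq : 2 * ((p + 1) / 2) = p + 1 := by
    obtain ⟨k, hk⟩ := hodd
    omega
  set w : (ZMod 2)[X] ⧸ I := ∑ i ∈ Finset.range ((p + 1) / 2), y ^ (2 * i) with hw
  have hinv : (y + 1) * w = 1 := by
    rw [hw, geom_double, hq, Finset.sum_range_succ, hsum, hyp, zero_add]
  -- Frobenius fixed point
  have hfrob : (y + 1) ^ 2 ^ m = y + 1 := by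
    have hchar : CharP ((ZMod 2)[X]) 2 := by infer_instance
    have hpol : (X ^ n + 1 : (ZMod 2)[X]) ^ 2 ^ m = X ^ (n * (p + 1)) + 1 := by
      rw [add_pow_char_pow, one_pow, ← pow_mul, h2m]
    calc (y + 1) ^ 2 ^ m = mk ((X ^ n + 1) ^ 2 ^ m) := by rw [map_pow, hu]
      _ = mk (X ^ (n * (p + 1)) + 1) := by rw [hpol]
      _ = x ^ (n * (p + 1)) + 1 := by rw [map_add, map_pow, map_one, hx]
      _ = y + 1 := by
          rw [mul_add, mul_one, pow_add, mul_comm n p, pow_mul, hxp, one_pow, one_mul, hy]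
  have : (y + 1) ^ p * ((y + 1) * w) = (y + 1) * w := by
    rw [← mul_assoc, ← pow_succ, ← h2m, hfrob]
  rw [hu]
  rw [hinv, mul_one] at this
  exact this

/-- Key field-theoretic step. -/
lemma field_step (p : ℕ) (hp : p.Prime) (hodd : Odd p) (n : ℕ) (hn : 0 < n)
    (hnp : Nat.Coprime n p) (K : Type*) [Field K] [CharP K 2] [Algebra (ZMod 2) K]
    (hcycsplits : ((cyclotomic p (ZMod 2)).map (algebraMap (ZMod 2) K)).Splits)
    (hroot : ∀ θ : K, IsPrimitiveRoot θ p → (θ ^ n + 1) ^ p = 1) :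
    ∃ m, p = 2 ^ m - 1 := by
  haveI : Fact p.Prime := ⟨hp⟩
  -- key step
  have hstep : ∀ μ : K, μ ^ p = 1 → (μ + 1) ^ (p + 1) = μ + 1 := by
    intro μ hμ
    by_cases h1 : μ = 1
    · subst h1
      have : (1 : K) + 1 = 0 := CharTwo.add_self_eq_zero 1
      rw [this, zero_pow (Nat.succ_ne_zero p)]
    · have horder : orderOf μ = p := orderOf_eq_prime hμ h1
      have hprim : IsPrimitiveRoot μ p := by
        have hpr := IsPrimitiveRoot.orderOf μ
        rwa [horder] at hpr
      obtain ⟨k, hk⟩ : ∃ k, n * k % p = 1 := by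
        obtain ⟨k, -, hk⟩ := Nat.exists_mul_mod_eq_one_of_coprime hnp hp.one_lt
        exact ⟨k, hk⟩
      have hkp : k.Coprime p := by
        rw [Nat.coprime_comm, Nat.Prime.coprime_iff_not_dvd hp]
        intro hdvd'
        obtain ⟨c, hc⟩ := hdvd'
        rw [hc, mul_comm n (p * c), mul_assoc, Nat.mul_mod_right] at hk
        omega
      have hθ : IsPrimitiveRoot (μ ^ k) p := hprim.pow_of_coprime k hkp
      have hθn : (μ ^ k) ^ n = μ := by
        rw [← pow_mul, pow_eq_pow_mod (k * n) hμ, mul_comm k n, hk, pow_one]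
      have := hroot (μ ^ k) hθ
      rw [hθn] at this
      rw [pow_succ, this, one_mul]
  -- the subring of solutions of x^(p+1) = x
  set f₀ : (ZMod 2)[X] := X ^ (p + 1) - X with hf₀
  have hpodd2 : ((p + 1 : ℕ) : ZMod 2) = 0 := by
    rw [ZMod.natCast_eq_zero_iff]
    rw [Nat.odd_iff] at hodd
    omega
  have hsep : f₀.Separable := by
    rw [separable_def, hf₀]
    have hd : derivative (X ^ (p + 1) - X : (ZMod 2)[X]) = -1 := by
      rw [derivative_sub, derivative_X_pow, derivative_X, hpodd2, map_zero, zero_mul,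
        zero_sub]
    rw [hd]
    exact (isCoprime_one_right).neg_right
  have hXp : ((X : (ZMod 2)[X]) - 1) * cyclotomic p (ZMod 2) = X ^ p - 1 := by
    have := prod_cyclotomic_eq_X_pow_sub_one hp.pos (ZMod 2)
    rw [hp.divisors, Finset.prod_pair hp.one_lt.ne] at this
    rwa [cyclotomic_one] at this
  have hfactor : f₀ = X * (((X : (ZMod 2)[X]) - 1) * cyclotomic p (ZMod 2)) := by
    rw [hXp, hf₀]
    ring
  have hsplits : (f₀.map (algebraMap (ZMod 2) K)).Splits := by
    rw [hfactor, Polynomial.map_mul, Polynomial.map_mul, Polynomial.map_X]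
    refine Splits.X.mul (Splits.mul ?_ hcycsplits)
    have : (((X : (ZMod 2)[X]) - 1).map (algebraMap (ZMod 2) K)) = X - C 1 := by simp
    rw [this]
    exact Splits.X_sub_C _
  have hf₀ne : f₀ ≠ 0 := by
    have hmon : f₀.Monic := by
      rw [hf₀]
      apply monic_X_pow_sub
      rw [degree_X]
      exact_mod_cast Nat.lt_of_lt_of_le hp.one_lt (Nat.le_succ p)
    exact hmon.ne_zero
  have hdeg : f₀.natDegree = p + 1 := by
    have h1 : (X : (ZMod 2)[X]).natDegree < (X ^ (p + 1) : (ZMod 2)[X]).natDegree := by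
      rw [natDegree_X, natDegree_X_pow]
      exact Nat.lt_succ_of_lt hp.one_lt
    rw [hf₀, natDegree_sub_eq_left_of_natDegree_lt h1, natDegree_X_pow]
  have hmem : ∀ z : K, z ∈ f₀.rootSet K ↔ z ^ (p + 1) = z := by
    intro z
    rw [mem_rootSet, hf₀]
    simp only [map_sub, map_pow, aeval_X]
    constructor
    · rintro ⟨-, h⟩; rwa [sub_eq_zero] at h
    · intro h; exact ⟨hf₀ne, by rwa [sub_eq_zero]⟩
  -- S as a subring
  set S : Subring K :=
    { carrier := {z : K | z ^ (p + 1) = z}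
      one_mem' := one_pow _
      mul_mem' := fun {a b} ha hb => by
        simp only [Set.mem_setOf_eq] at *
        rw [mul_pow, ha, hb]
      zero_mem' := zero_pow (Nat.succ_ne_zero p)
      add_mem' := fun {a b} ha hb => by
        simp only [Set.mem_setOf_eq] at *
        rcases eq_or_ne a 0 with rfl | ha0
        · rwa [zero_add]
        rcases eq_or_ne b 0 with rfl | hb0
        · rwa [add_zero]
        rcases eq_or_ne a b with rfl | hab
        · rw [CharTwo.add_self_eq_zero, zero_pow (Nat.succ_ne_zero p)]
        have hap : a ^ p = 1 := by
          have : a ^ p * a = 1 * a := by rw [← pow_succ, ha, one_mul]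
          exact mul_right_cancel₀ ha0 this
        have hbp : b ^ p = 1 := by
          have : b ^ p * b = 1 * b := by rw [← pow_succ, hb, one_mul]
          exact mul_right_cancel₀ hb0 this
        set μ : K := a⁻¹ * b with hμdef
        have hμp : μ ^ p = 1 := by
          rw [hμdef, mul_pow, inv_pow, hap, hbp, inv_one, one_mul]
        have hfix := hstep μ hμp
        have hab' : a + b = a * (μ + 1) := by
          rw [hμdef, mul_add, mul_one, ← mul_assoc, mul_inv_cancel₀ ha0, one_mul, add_comm]
        rw [hab', mul_pow, ha, hfix]
      neg_mem' := fun {a} ha => by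
        simpa only [Set.mem_setOf_eq, CharTwo.neg_eq] using ha }
    with hS
  have hequiv : S ≃ f₀.rootSet K :=
    Equiv.subtypeEquivRight (fun z => ((hmem z).symm : _))
  haveI : Fintype S := Fintype.ofEquiv _ hequiv.symm
  have hcardS : Fintype.card S = p + 1 := by
    have h1 := card_rootSet_eq_natDegree (K := K) hsep hsplits
    rw [hdeg] at h1
    rw [← h1]
    exact Fintype.card_congr hequiv
  haveI : IsDomain S := by infer_instance
  letI : DecidableEq S := Classical.decEq _
  letI : Field S := Fintype.fieldOfDomain S
  haveI : CharP S 2 := CharP.subring' K 2 S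
  obtain ⟨m, -, hcard⟩ := FiniteField.card S 2
  refine ⟨m, ?_⟩
  rw [hcardS] at hcard
  omega

/-- Forward direction. -/
lemma fwd_dir (p : ℕ) (hp : p.Prime) (hodd : Odd p) (n : ℕ) (hn : 0 < n)
    (hnp : Nat.Coprime n p)
    (H : (Ideal.Quotient.mk (Ideal.span {cyclotomic p (ZMod 2)}) (X ^ n + 1)) ^ p = 1) :
    ∃ m, p = 2 ^ m - 1 := by
  haveI : Fact p.Prime := ⟨hp⟩
  have hdvd : cyclotomic p (ZMod 2) ∣ (X ^ n + 1) ^ p - 1 := by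
    rw [← Ideal.mem_span_singleton, ← Ideal.Quotient.eq_zero_iff_mem]
    rw [map_sub, map_one, map_pow, H, sub_self]
  letI K := (cyclotomic p (ZMod 2)).SplittingField
  haveI hchar : CharP K 2 := charP_of_injective_algebraMap (algebraMap (ZMod 2) K).injective 2
  haveI : NeZero (p : K) := by
    refine ⟨fun h => ?_⟩
    rw [CharP.cast_eq_zero_iff K 2 p] at h
    rw [Nat.odd_iff] at hodd
    omega
  have hroot : ∀ θ : K, IsPrimitiveRoot θ p → (θ ^ n + 1) ^ p = 1 := by
    intro θ hθ
    have h1 : IsRoot (cyclotomic p K) θ := (isRoot_cyclotomic_iff).mpr hθ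
    have h2 : cyclotomic p K ∣ (X ^ n + 1) ^ p - 1 := by
      have h5 := Polynomial.map_dvd (algebraMap (ZMod 2) K) hdvd
      rwa [map_cyclotomic, Polynomial.map_sub, Polynomial.map_pow, Polynomial.map_add,
        Polynomial.map_pow, Polynomial.map_X, Polynomial.map_one] at h5
    have h3 : eval θ ((X ^ n + 1) ^ p - 1 : K[X]) = 0 :=
      eval_eq_zero_of_dvd_of_eval_eq_zero h2 h1
    have h4 : eval θ ((X ^ n + 1) ^ p - 1 : K[X]) = (θ ^ n + 1) ^ p - 1 := by simp
    rw [h4, sub_eq_zero] at h3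
    exact h3
  exact field_step p hp hodd n hn hnp K (SplittingField.splits _) hroot

end Stmt14

theorem stmt_14 (p : ℕ) (hp : p.Prime) (hodd : Odd p) (n : ℕ) (hn : 0 < n)
    (hnp : Nat.Coprime n p) :
    (Ideal.Quotient.mk (Ideal.span {cyclotomic p (ZMod 2)}) (X ^ n + 1)) ^ p = 1 ↔
      ∃ m, p = 2 ^ m - 1 := by
  constructor
  · exact Stmt14.fwd_dir p hp hodd n hn hnp
  · rintro ⟨m, hm⟩
    exact Stmt14.mers_dir p hp hodd n hn hnp m hm
end

section
/- For a prime p > 3, (1 + x + x^2)^p = 1 in F_2[x]/(x^p - 1) if and only if p is a Mersenne prime. -/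
open Polynomial Finset

private lemma lucas2 (n k : ℕ) :
    n.choose k % 2 = (n % 2).choose (k % 2) * ((n / 2).choose (k / 2)) % 2 := by
  haveI : Fact (Nat.Prime 2) := ⟨Nat.prime_two⟩
  exact Choose.choose_modEq_choose_mod_mul_choose_div_nat (p := 2)

private lemma chooseOdd : ∀ j A : ℕ,
    (A * 2^(j+2) + 2^(j+1) - 1).choose (A * 2^(j+2) + 2^j - 1) % 2 = 1 := by
  intro j
  induction j with
  | zero =>
    intro A
    have h1 : A * 2^2 + 2^1 - 1 = (A * 4) + 1 := by omega
    have h2 : A * 2^2 + 2^0 - 1 = A * 4 := by omega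
    rw [h1, h2, Nat.choose_succ_self_right]
    omega
  | succ j ih =>
    intro A
    have hpos : (1:ℕ) ≤ 2^(j+1) := Nat.one_le_two_pow
    have hpos0 : (1:ℕ) ≤ 2^j := Nat.one_le_two_pow
    have q1 : A * 2^(j+1+2) = 2 * (A * 2^(j+2)) := by ring
    have q2 : (2:ℕ)^(j+1+1) = 2 * 2^(j+1) := by ring
    have q3 : (2:ℕ)^(j+1) = 2 * 2^j := by ring
    have hn : A * 2^(j+1+2) + 2^(j+1+1) - 1
        = 2 * (A * 2^(j+2) + 2^(j+1) - 1) + 1 := by omega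
    have hk : A * 2^(j+1+2) + 2^(j+1) - 1
        = 2 * (A * 2^(j+2) + 2^j - 1) + 1 := by omega
    rw [hn, hk, lucas2]
    simp only [Nat.mul_add_mod, Nat.mul_add_div (by norm_num : 0 < 2)]
    norm_num
    exact ih A

private lemma chooseEven : ∀ j B : ℕ,
    (B * 2^(j+2) + 2^(j+2) + 2^(j+1) - 1).choose (B * 2^(j+2) + 2^(j+1) + 2^j - 1) % 2 = 0 := by
  intro j
  induction j with
  | zero =>
    intro B
    have h1 : B * 2^2 + 2^2 + 2^1 - 1 = 2 * (2*B + 2) + 1 := by omega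
    have h2 : B * 2^2 + 2^1 + 2^0 - 1 = 2 * (2*B + 1) := by omega
    rw [h1, h2, lucas2]
    simp only [Nat.mul_add_mod, Nat.mul_add_div (by norm_num : 0 < 2)]
    norm_num
    omega
  | succ j ih =>
    intro B
    have hpos : (1:ℕ) ≤ 2^(j+1) := Nat.one_le_two_pow
    have hpos0 : (1:ℕ) ≤ 2^j := Nat.one_le_two_pow
    have q1 : B * 2^(j+1+2) = 2 * (B * 2^(j+2)) := by ring
    have q2 : (2:ℕ)^(j+1+2) = 2 * 2^(j+2) := by ring
    have q2' : (2:ℕ)^(j+2) = 2 * 2^(j+1) := by ring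
    have q3 : (2:ℕ)^(j+1) = 2 * 2^j := by ring
    have hn : B * 2^(j+1+2) + 2^(j+1+2) + 2^(j+1+1) - 1
        = 2 * (B * 2^(j+2) + 2^(j+2) + 2^(j+1) - 1) + 1 := by omega
    have hk : B * 2^(j+1+2) + 2^(j+1+1) + 2^(j+1) - 1
        = 2 * (B * 2^(j+2) + 2^(j+1) + 2^j - 1) + 1 := by omega
    rw [hn, hk, lucas2]
    simp only [Nat.mul_add_mod, Nat.mul_add_div (by norm_num : 0 < 2)]
    norm_num
    exact ih B

set_option maxHeartbeats 1000000 in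
theorem stmt_16 (p : ℕ) (hp : p.Prime) (h3 : 3 < p) :
    (Ideal.Quotient.mk (Ideal.span {(X : Polynomial (ZMod 2)) ^ p - 1})
      (1 + X + X ^ 2)) ^ p = 1 ↔ ∃ n, p = 2 ^ n - 1 := by
  set I : Ideal (Polynomial (ZMod 2)) := Ideal.span {(X : Polynomial (ZMod 2)) ^ p - 1} with hI
  set π : Polynomial (ZMod 2) →+* (Polynomial (ZMod 2) ⧸ I) := Ideal.Quotient.mk I with hπ
  set y := π X with hy
  set a := π (1 + X + X^2) with ha
  have hp0 : 0 < p := by omega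
  have h2 : (2 : Polynomial (ZMod 2) ⧸ I) = 0 := by
    have h : (C (2:ZMod 2) : Polynomial (ZMod 2)) = 2 := map_ofNat C 2
    have h2p : (2 : Polynomial (ZMod 2)) = 0 := by
      rw [← h, show (2:ZMod 2) = 0 by decide, map_zero]
    rw [show (2 : Polynomial (ZMod 2) ⧸ I) = π 2 from (map_ofNat π 2).symm, h2p, map_zero]
  have hyp : y ^ p = 1 := by
    have h0 : π (X^p - 1) = 0 := by
      rw [Ideal.Quotient.eq_zero_iff_mem]; exact Ideal.subset_span rfl
    rw [map_sub, map_pow, map_one, sub_eq_zero] at h0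
    exact h0
  have hyk : ∀ k : ℕ, y ^ k = y ^ (k % p) := by
    intro k
    conv_lhs => rw [← Nat.div_add_mod k p]
    rw [pow_add, pow_mul, hyp, one_pow, one_mul]
  have haa : a = 1 + y + y^2 := by rw [ha, map_add, map_add, map_one, map_pow, hy]
  -- N
  set N := ∑ j ∈ range p, y ^ j with hN
  have hyN : y * N = N := by
    rw [hN, Finset.mul_sum]
    have h1 : ∑ j ∈ range p, y * y ^ j = ∑ j ∈ range p, y ^ (j+1) := by
      refine Finset.sum_congr rfl fun j _ => ?_; rw [← pow_succ']
    obtain ⟨q, rfl⟩ : ∃ q, p = q + 1 := ⟨p - 1, by omega⟩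
    rw [h1, Finset.sum_range_succ, Finset.sum_range_succ', hyp]
    simp
  have haN : a * N = N := by
    rw [haa, add_mul, add_mul, one_mul, pow_two, mul_assoc, hyN, hyN]
    have hNN : N + N = 0 := by
      calc N + N = 2 * N := (two_mul N).symm
        _ = 0 := by rw [h2, zero_mul]
    rw [hNN, zero_add]
  -- geometric telescoping
  have hgeom : ∀ s : ℕ, a * ∑ k ∈ range s, y ^ (3*k) = ∑ j ∈ range (3*s), y ^ j := by
    intro s
    induction s with
    | zero => simp
    | succ s ih =>
      rw [Finset.sum_range_succ, mul_add, ih]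
      have h3s : 3 * (s+1) = (3*s + 1) + 1 + 1 := by ring
      rw [h3s, Finset.sum_range_succ, Finset.sum_range_succ, Finset.sum_range_succ]
      rw [haa]
      ring
  -- sum over t periods
  have hNt : ∀ t : ℕ, ∑ j ∈ range (p*t), y ^ j = (t:ℕ) • N := by
    intro t
    induction t with
    | zero => simp
    | succ t ih =>
      have hpt : p * (t+1) = p*t + p := by ring
      rw [hpt, Finset.sum_range_add, ih, succ_nsmul]
      congr 1
      calc ∑ j ∈ range p, y ^ (p*t + j) = ∑ j ∈ range p, (y^p)^t * y^j := by
            refine Finset.sum_congr rfl fun j _ => ?_; rw [pow_add, pow_mul]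
        _ = N := by rw [hyp, one_pow]; simp [hN]
  -- a is a unit
  have hunit : ∃ c, a * c = 1 := by
    have hcop : Nat.Coprime 3 p := by
      have := Nat.coprime_primes Nat.prime_three hp
      exact (this.mpr (by omega))
    obtain ⟨s, -, hs⟩ := Nat.exists_mul_mod_eq_one_of_coprime hcop (by omega)
    set t := 3 * s / p with ht
    have hst : 3 * s = p * t + 1 := by
      have h := Nat.div_add_mod (3*s) p
      rw [← ht] at h
      omega
    refine ⟨(∑ k ∈ range s, y ^ (3*k)) + (t:ℕ) * N, ?_⟩
    rw [mul_add, hgeom, hst, Finset.sum_range_add]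
    have h1 : ∑ j ∈ range 1, y ^ (p*t + j) = (y^p)^t := by simp [pow_mul]
    rw [h1, hyp, one_pow, hNt, nsmul_eq_mul]
    have h2' : a * ((t:ℕ) * N) = (t:ℕ) * N := by
      rw [mul_left_comm, haN]
    rw [h2']
    have hz : (t:ℕ) * N + (t:ℕ) * N = 0 := by
      rw [← two_mul, ← mul_assoc, show ((2:(ZMod 2)[X] ⧸ I)) * (t:ℕ) = 0 from by rw [h2, zero_mul], zero_mul]
    rw [add_comm ((t:ℕ)*N) 1, add_assoc, hz, add_zero]
  obtain ⟨c, hc⟩ := hunit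
  -- squaring lemma
  have hsqr : ∀ u v : (Polynomial (ZMod 2) ⧸ I), (1 + u + v)^2 = 1 + u^2 + v^2 := by
    intro u v
    linear_combination (u + v + u*v) * h2
  have hsq : ∀ n : ℕ, a ^ (2^n) = 1 + y^(2^n) + y^(2^(n+1)) := by
    intro n
    induction n with
    | zero => simpa using haa
    | succ n ih =>
      have : a ^ (2^(n+1)) = (a ^ (2^n))^2 := by rw [← pow_mul, pow_succ]
      rw [this, ih, hsqr, ← pow_mul, ← pow_mul, ← pow_succ, ← pow_succ]
  have hgoal : (Ideal.Quotient.mk I (1 + X + X ^ 2)) ^ p = a ^ p := rfl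
  rw [hgoal]
  constructor
  · -- converse : a^p = 1 → Mersenne
    intro hap
    by_contra hM
    push_neg at hM
    have hPex : ∃ i, p % 2^(i+1) ≠ 2^(i+1) - 1 := by
      refine ⟨p, ?_⟩
      have h1 : p < 2^p := Nat.lt_two_pow_self
      have h2' : 2^p ≤ 2^(p+1) := Nat.pow_le_pow_right (by norm_num) (by omega)
      have h3' : p % 2^(p+1) = p := Nat.mod_eq_of_lt (by omega)
      omega
    have hodd : p % 2 = 1 := Nat.odd_iff.mp (hp.odd_of_ne_two (by omega))
    have hi1 : Nat.find hPex ≠ 0 := by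
      intro h0
      have := Nat.find_spec hPex
      rw [h0] at this
      norm_num at this
      omega
    obtain ⟨j, hj⟩ : ∃ j, Nat.find hPex = j + 1 := ⟨Nat.find hPex - 1, by omega⟩
    have hPi : p % 2^(j+2) ≠ 2^(j+2) - 1 := by
      have := Nat.find_spec hPex
      rw [hj] at this
      exact this
    have hlowj : p % 2^(j+1) = 2^(j+1) - 1 := by
      have := Nat.find_min hPex (m := j) (by omega)
      simpa using not_ne_iff.mp this
    have hu : (1:ℕ) ≤ 2^j := Nat.one_le_two_pow
    have q2 : (2:ℕ)^(j+1) = 2 * 2^j := by ring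
    have q4 : (2:ℕ)^(j+2) = 4 * 2^j := by ring
    have hmod : p % 2^(j+2) = 2^(j+1) - 1 := by
      have hr2 : p % 2^(j+2) < 2^(j+2) := Nat.mod_lt _ (by positivity)
      have hr1 : p % 2^(j+2) % 2^(j+1) = 2^(j+1) - 1 := by
        rw [Nat.mod_mod_of_dvd _ ⟨2, by ring⟩, hlowj]
      rcases lt_or_ge (p % 2^(j+2)) (2^(j+1)) with hlt | hge
      · rwa [Nat.mod_eq_of_lt hlt] at hr1
      · exfalso
        apply hPi
        rw [Nat.mod_eq_sub_mod hge, Nat.mod_eq_of_lt (by omega)] at hr1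
        omega
    obtain ⟨A, hA⟩ : ∃ A, p = 2^(j+2) * A + (2^(j+1) - 1) := by
      refine ⟨p / 2^(j+2), ?_⟩
      conv_lhs => rw [← Nat.div_add_mod p (2^(j+2))]
      rw [hmod]
    have hA1 : 1 ≤ A := by
      rcases Nat.eq_zero_or_pos A with h0 | h1
      · rw [h0, mul_zero, zero_add] at hA
        exact absurd hA (hM (j+1))
      · exact h1
    obtain ⟨B, hB⟩ : ∃ B, A = B + 1 := ⟨A - 1, by omega⟩
    have hAgt : 2^(j+2) ≤ 2^(j+2) * A := Nat.le_mul_of_pos_right _ hA1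
    have hcA : A * 2^(j+2) = 2^(j+2) * A := mul_comm _ _
    have hcB : B * 2^(j+2) = 2^(j+2) * A - 2^(j+2) := by
      rw [hB, mul_add, mul_one, mul_comm]
      omega
    set e := p - 3*2^j with he
    set k0 := p - 2^j with hk0
    have h3u : 3*2^j < p := by omega
    have he1 : 0 < e := by omega
    have hep : e < p := by omega
    have hk01 : 0 < k0 := by omega
    have hk0p : k0 < p := by omega
    have hcho1 : p.choose k0 % 2 = 1 := by
      have h := chooseOdd j A
      rw [show A * 2^(j+2) + 2^(j+1) - 1 = p from by omega,
        show A * 2^(j+2) + 2^j - 1 = k0 from by omega] at h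
      exact h
    have hcho0 : p.choose e % 2 = 0 := by
      have h := chooseEven j B
      rw [show B * 2^(j+2) + 2^(j+2) + 2^(j+1) - 1 = p from by omega,
        show B * 2^(j+2) + 2^(j+1) + 2^j - 1 = e from by omega] at h
      exact h
    -- ring part
    set b := 1 + y with hb
    have hab : b * a = 1 + y^3 := by
      rw [hb, haa]
      linear_combination (y + y^2) * h2
    have hkey : (1 + y^3)^p = b^p := by
      rw [← hab, mul_pow, hap, mul_one]
    have hbp : b^p = ∑ k ∈ range (p+1),
        (p.choose k : (Polynomial (ZMod 2) ⧸ I)) * y^(k % p) := by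
      rw [hb, add_comm 1 y, add_pow]
      refine Finset.sum_congr rfl fun k hk => ?_
      rw [one_pow, mul_one, ← hyk k, mul_comm]
    have hy3p : (1 + y^3)^p = ∑ k ∈ range (p+1),
        (p.choose k : (Polynomial (ZMod 2) ⧸ I)) * y^((3*k) % p) := by
      rw [add_comm 1 (y^3), add_pow]
      refine Finset.sum_congr rfl fun k hk => ?_
      rw [one_pow, mul_one, ← pow_mul, ← hyk (3*k), mul_comm]
    set G : Polynomial (ZMod 2) :=
      ∑ k ∈ range (p+1), C ((p.choose k : ZMod 2)) * X^(k % p) with hG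
    set H : Polynomial (ZMod 2) :=
      ∑ k ∈ range (p+1), C ((p.choose k : ZMod 2)) * X^((3*k) % p) with hH
    have hcast : ∀ m : ℕ, π (C ((m : ZMod 2))) = (m : (Polynomial (ZMod 2) ⧸ I)) := by
      intro m
      rw [Polynomial.C_eq_natCast, map_natCast]
    have hπG : π G = b^p := by
      rw [hG, map_sum, hbp]
      refine Finset.sum_congr rfl fun k hk => ?_
      rw [map_mul, map_pow, hcast, hy]
    have hπH : π H = (1 + y^3)^p := by
      rw [hH, map_sum, hy3p]
      refine Finset.sum_congr rfl fun k hk => ?_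
      rw [map_mul, map_pow, hcast, hy]
    have hdegG : G.natDegree < p := by
      refine lt_of_le_of_lt (Polynomial.natDegree_sum_le_of_forall_le _ _ (n := p - 1)
        fun k hk => ?_) (by omega)
      exact le_trans (Polynomial.natDegree_C_mul_X_pow_le _ _)
        (Nat.le_pred_of_lt (Nat.mod_lt _ hp0))
    have hdegH : H.natDegree < p := by
      refine lt_of_le_of_lt (Polynomial.natDegree_sum_le_of_forall_le _ _ (n := p - 1)
        fun k hk => ?_) (by omega)
      exact le_trans (Polynomial.natDegree_C_mul_X_pow_le _ _)
        (Nat.le_pred_of_lt (Nat.mod_lt _ hp0))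
    have hGH : G = H := by
      have h0 : π (G - H) = 0 := by
        rw [map_sub, hπG, hπH, hkey, sub_self]
      have hmem : G - H ∈ I := Ideal.Quotient.eq_zero_iff_mem.mp h0
      rw [hI] at hmem
      have hdvd : (X : Polynomial (ZMod 2))^p - 1 ∣ (G - H) :=
        Ideal.mem_span_singleton.mp hmem
      have hdeg : (G - H).natDegree < ((X : Polynomial (ZMod 2))^p - 1).natDegree := by
        rw [show ((X : Polynomial (ZMod 2))^p - 1) = X^p - C 1 from by rw [Polynomial.C_1],
          Polynomial.natDegree_X_pow_sub_C]
        exact lt_of_le_of_lt (Polynomial.natDegree_sub_le G H) (by omega)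
      have := Polynomial.eq_zero_of_dvd_of_natDegree_lt hdvd hdeg
      exact sub_eq_zero.mp this
    -- coefficient extraction at e
    have hmodinj : ∀ k, k < p + 1 → (3*k) % p = e → k = k0 := by
      intro k hk hke
      have h30 : (3 * k0) % p = e := by
        have : 3 * k0 = e + p * 2 := by omega
        rw [this, Nat.add_mul_mod_self_left, Nat.mod_eq_of_lt hep]
      have hmodeq : 3 * k ≡ 3 * k0 [MOD p] := by
        unfold Nat.ModEq
        rw [hke, h30]
      have hcop3 : Nat.gcd p 3 = 1 := by
        have := (Nat.coprime_primes hp Nat.prime_three).mpr (by omega)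
        exact this
      have := (Nat.ModEq.cancel_left_of_coprime hcop3 hmodeq)
      have hkk : k % p = k0 % p := this
      rw [Nat.mod_eq_of_lt hk0p] at hkk
      rcases Nat.lt_or_ge k p with h | h
      · rw [Nat.mod_eq_of_lt h] at hkk; exact hkk
      · exfalso
        have : k = p := by omega
        rw [this, Nat.mod_self] at hkk
        omega
    have hcoeffG : G.coeff e = ((p.choose e : ZMod 2)) := by
      rw [hG, Polynomial.finset_sum_coeff]
      rw [Finset.sum_eq_single e]
      · rw [Polynomial.coeff_C_mul, Polynomial.coeff_X_pow,
          Nat.mod_eq_of_lt hep, if_pos rfl, mul_one]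
      · intro k hk hne
        rw [Polynomial.coeff_C_mul, Polynomial.coeff_X_pow, if_neg, mul_zero]
        intro hcontra
        rcases Nat.lt_or_ge k p with h | h
        · rw [Nat.mod_eq_of_lt h] at hcontra; exact hne hcontra.symm
        · have : k = p := by simp at hk; omega
          rw [this, Nat.mod_self] at hcontra; omega
      · intro hnotin
        exfalso
        exact hnotin (Finset.mem_range.mpr (by omega))
    have hcoeffH : H.coeff e = ((p.choose k0 : ZMod 2)) := by
      rw [hH, Polynomial.finset_sum_coeff]
      rw [Finset.sum_eq_single k0]
      · rw [Polynomial.coeff_C_mul, Polynomial.coeff_X_pow]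
        have h30 : (3 * k0) % p = e := by
          have : 3 * k0 = e + p * 2 := by omega
          rw [this, Nat.add_mul_mod_self_left, Nat.mod_eq_of_lt hep]
        rw [h30, if_pos rfl, mul_one]
      · intro k hk hne
        rw [Polynomial.coeff_C_mul, Polynomial.coeff_X_pow, if_neg, mul_zero]
        intro hcontra
        exact hne (hmodinj k (Finset.mem_range.mp hk) hcontra.symm)
      · intro hnotin
        exfalso
        exact hnotin (Finset.mem_range.mpr (by omega))
    have hfinal : ((p.choose e : ZMod 2)) = ((p.choose k0 : ZMod 2)) := by
      rw [← hcoeffG, ← hcoeffH, hGH]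
    have hz : ((p.choose e : ZMod 2)) = 0 := by
      rw [← Nat.mod_add_div (p.choose e) 2, hcho0]
      push_cast
      rw [show ((2:ZMod 2)) = 0 from by decide]
      ring
    have ho : ((p.choose k0 : ZMod 2)) = 1 := by
      rw [← Nat.mod_add_div (p.choose k0) 2, hcho1]
      push_cast
      rw [show ((2:ZMod 2)) = 0 from by decide]
      ring
    rw [hz, ho] at hfinal
    exact absurd hfinal (by decide)
  · -- forward : Mersenne → a^p = 1
    rintro ⟨n, hn⟩
    have h2n : 2^n = p + 1 := by
      have : (1:ℕ) ≤ 2^n := Nat.one_le_two_pow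
      omega
    have h2n1 : 2^(n+1) = 2*p + 2 := by rw [pow_succ]; omega
    have hyp1 : y^(p+1) = y := by rw [pow_succ, hyp, one_mul]
    have hyp2 : y^(2*p+2) = y^2 := by
      rw [show 2*p+2 = p + (p + 2) from by ring, pow_add, hyp, one_mul,
        show p + 2 = p + 2 from rfl, pow_add, hyp, one_mul]
    have hfix : a ^ (p+1) = a := by
      rw [← h2n, hsq n, h2n, h2n1, hyp1, hyp2, ← haa]
    have : a ^ p * a = a := by rw [← pow_succ, hfix]
    calc a ^ p = a ^ p * (a * c) := by rw [hc, mul_one]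
      _ = (a ^ p * a) * c := by ring
      _ = a * c := by rw [this]
      _ = 1 := hc
end

section
/- Let p > 3 be prime. If (1 + x + x^2)^p = 1 in F_2[x]/(x^p - 1), then for all 0 ≤ j ≤ p, the binomial coefficient C(p, j) is congruent modulo 2 to C(p, 3j mod p). -/
open Polynomial

theorem stmt_17 (p : ℕ) (hp : p.Prime) (h3 : 3 < p)
    (h : (Ideal.Quotient.mk (Ideal.span {(X : Polynomial (ZMod 2)) ^ p - 1})
      (1 + X + X ^ 2)) ^ p = 1) :
    ∀ j ≤ p, Nat.choose p j ≡ Nat.choose p (3 * j % p) [MOD 2] := by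
  haveI : Fact p.Prime := ⟨hp⟩
  have hp0 : 0 < p := hp.pos
  have hnd3 : ¬ p ∣ 3 := fun hd => absurd (Nat.le_of_dvd (by norm_num) hd) (by omega)
  let φ : Polynomial (ZMod 2) →+* AddMonoidAlgebra (ZMod 2) (ZMod p) :=
    (AddMonoidAlgebra.mapDomainRingHom (ZMod 2) (Nat.castAddMonoidHom (ZMod p))).comp
      (Polynomial.toFinsuppIso (ZMod 2)).toRingHom
  have hφX : φ X = AddMonoidAlgebra.single (1 : ZMod p) (1 : ZMod 2) := by
    simp [φ, Polynomial.toFinsuppIso, Polynomial.toFinsupp_X]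
  have hφpow : ∀ n : ℕ, φ (X ^ n) = AddMonoidAlgebra.single ((n : ZMod p)) (1 : ZMod 2) := by
    intro n
    rw [map_pow, hφX, AddMonoidAlgebra.single_pow, one_pow, nsmul_eq_mul, mul_one]
  have hker : φ (X ^ p - 1) = 0 := by
    rw [map_sub, map_one, hφpow]
    simp [AddMonoidAlgebra.one_def]
  have hmul : ((1:(ZMod 2)[X]) + X) * (1 + X + X^2) = 1 + X^3 := by
    have h2 : (2:(ZMod 2)[X]) = 0 := by exact_mod_cast CharP.cast_eq_zero ((ZMod 2)[X]) 2
    linear_combination (X + X^2 : (ZMod 2)[X]) * h2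
  have hdvd : (X:(ZMod 2)[X]) ^ p - 1 ∣ (1 + X + X ^ 2) ^ p - 1 := by
    rw [← Ideal.mem_span_singleton, ← Ideal.Quotient.eq_zero_iff_mem]
    rw [map_sub, map_one, map_pow, h, sub_self]
  have hφ1 : φ ((1 + X + X ^ 2) ^ p) = 1 := by
    obtain ⟨c, hc⟩ := hdvd
    have := congrArg φ hc
    rw [map_sub, map_one, map_mul, hker, zero_mul, sub_eq_zero] at this
    exact this
  have expand : ∀ a : ℕ, (1 + (φ X) ^ a) ^ p =
      ∑ k ∈ Finset.range (p+1),
        AddMonoidAlgebra.single (((a*k : ℕ) : ZMod p)) ((p.choose k : ZMod 2)) := by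
    intro a
    rw [add_comm, add_pow]
    refine Finset.sum_congr rfl fun k hk => ?_
    rw [one_pow, mul_one, ← pow_mul, ← map_pow, hφpow, AddMonoidAlgebra.natCast_def,
      AddMonoidAlgebra.single_mul_single, one_mul, add_zero]
  have key : (∑ k ∈ Finset.range (p+1),
        AddMonoidAlgebra.single (((3*k : ℕ) : ZMod p)) ((p.choose k : ZMod 2)))
      = ∑ k ∈ Finset.range (p+1),
        AddMonoidAlgebra.single (((1*k : ℕ) : ZMod p)) ((p.choose k : ZMod 2)) := by
    rw [← expand 3, ← expand 1, pow_one]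
    calc (1 + (φ X) ^ 3) ^ p = φ ((1 + X ^ 3) ^ p) := by
          simp only [map_pow, map_add, map_one]
      _ = φ ((1 + X) ^ p) * φ ((1 + X + X ^ 2) ^ p) := by
          rw [← map_mul, ← mul_pow, hmul]
      _ = (1 + φ X) ^ p := by rw [hφ1, mul_one, map_pow, map_add, map_one]
  intro j hj
  rcases Nat.eq_zero_or_pos j with rfl | hj0
  · simp [Nat.ModEq.refl]
  rcases eq_or_lt_of_le hj with rfl | hjp
  · rw [Nat.mul_mod_left, Nat.choose_self, Nat.choose_zero_right]
  -- main case 0 < j < p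
  set t := 3 * j % p with ht_def
  have htp : t < p := Nat.mod_lt _ hp0
  have ht0 : 0 < t := by
    rcases Nat.eq_zero_or_pos t with ht | ht
    · exfalso
      have : p ∣ 3 * j := Nat.dvd_of_mod_eq_zero ht
      rcases (Nat.Prime.dvd_mul hp).mp this with hd | hd
      · exact hnd3 hd
      · exact absurd (Nat.le_of_dvd hj0 hd) (by omega)
    · exact ht
  have E := congrArg (fun f => AddMonoidAlgebra.coeff f ((t : ℕ) : ZMod p)) key
  simp only [AddMonoidAlgebra.coeff_sum, AddMonoidAlgebra.coeff_single] at E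
  rw [Finset.sum_apply', Finset.sum_apply'] at E
  have hL : (∑ k ∈ Finset.range (p+1),
      (Finsupp.single (((3*k : ℕ) : ZMod p)) ((p.choose k : ZMod 2))) ((t : ℕ) : ZMod p))
      = (p.choose j : ZMod 2) := by
    rw [Finset.sum_eq_single_of_mem j (Finset.mem_range.mpr (by omega))]
    · rw [Finsupp.single_apply, if_pos]
      rw [ht_def, ZMod.natCast_mod]
    · intro k hk hkj
      rw [Finsupp.single_apply, if_neg]
      intro hc
      rw [ht_def, ZMod.natCast_mod, ZMod.natCast_eq_natCast_iff] at hc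
      have hcop : Nat.Coprime p 3 := (hp.coprime_iff_not_dvd).mpr hnd3
      have hkj' : k ≡ j [MOD p] := hc.cancel_left_of_coprime hcop
      have hk' : k < p + 1 := Finset.mem_range.mp hk
      have hjm : j % p = j := Nat.mod_eq_of_lt hjp
      have hkm := hkj'
      unfold Nat.ModEq at hkm
      rcases eq_or_lt_of_le (Nat.lt_succ_iff.mp hk') with rfl | hklt
      · rw [Nat.mod_self, hjm] at hkm; omega
      · rw [Nat.mod_eq_of_lt hklt, hjm] at hkm; exact hkj hkm
  have hR : (∑ k ∈ Finset.range (p+1),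
      (Finsupp.single (((1*k : ℕ) : ZMod p)) ((p.choose k : ZMod 2))) ((t : ℕ) : ZMod p))
      = (p.choose t : ZMod 2) := by
    rw [Finset.sum_eq_single_of_mem t (Finset.mem_range.mpr (by omega))]
    · rw [Finsupp.single_apply, if_pos]
      rw [one_mul]
    · intro k hk hkt
      rw [Finsupp.single_apply, if_neg]
      intro hc
      rw [one_mul, ZMod.natCast_eq_natCast_iff] at hc
      have hk' : k < p + 1 := Finset.mem_range.mp hk
      have htm : t % p = t := Nat.mod_eq_of_lt htp
      have hkm := hc
      unfold Nat.ModEq at hkm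
      rcases eq_or_lt_of_le (Nat.lt_succ_iff.mp hk') with rfl | hklt
      · rw [Nat.mod_self, htm] at hkm; omega
      · rw [Nat.mod_eq_of_lt hklt, htm] at hkm; exact hkt hkm
  rw [hL, hR] at E
  exact (ZMod.natCast_eq_natCast_iff _ _ _).mp E
end

section
/- Let p > 3 be a prime such that C(p, j) ≡ C(p, 3j mod p) (mod 2) for all 1 ≤ j ≤ p - 1. Then p is a Mersenne prime, i.e., p + 1 is a power of 2. -/
instance : Fact (Nat.Prime 2) := ⟨Nat.prime_two⟩

lemma choose_parity (k : ℕ) : ∀ n : ℕ, Nat.choose n k % 2 = 1 ↔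
    ∀ i, k.testBit i = true → n.testBit i = true := by
  induction k using Nat.strong_induction_on with
  | _ k ih =>
    intro n
    rcases Nat.eq_zero_or_pos k with hk | hk
    · subst hk
      simp [Nat.testBit_zero]
    · have hlucas : Nat.choose n k % 2 =
          (Nat.choose (n % 2) (k % 2) * Nat.choose (n / 2) (k / 2)) % 2 :=
        Choose.choose_modEq_choose_mod_mul_choose_div_nat (p := 2)
      rw [hlucas, ← Nat.odd_iff, Nat.odd_mul, Nat.odd_iff, Nat.odd_iff]
      have ihk : Nat.choose (n / 2) (k / 2) % 2 = 1 ↔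
          ∀ i, (k / 2).testBit i = true → (n / 2).testBit i = true :=
        ih (k / 2) (Nat.div_lt_self hk one_lt_two) (n / 2)
      constructor
      · intro h1 i hbit
        cases i with
        | zero =>
          rw [Nat.testBit_zero] at hbit ⊢
          have hkk : k % 2 = 1 := by simpa using hbit
          have h2 := h1.1
          rw [hkk] at h2
          have hn2 : n % 2 < 2 := Nat.mod_lt _ two_pos
          interval_cases hh : n % 2 <;> simp_all
        | succ i =>
          rw [Nat.testBit_succ] at hbit ⊢
          exact (ihk.mp h1.2) i hbit
      · intro hbits
        have h2 : Nat.choose (n / 2) (k / 2) % 2 = 1 := by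
          refine ihk.mpr fun i hbit => ?_
          have hb := hbits (i + 1)
          rw [Nat.testBit_succ, Nat.testBit_succ] at hb
          exact hb hbit
        have h1 : Nat.choose (n % 2) (k % 2) % 2 = 1 := by
          have hk2 : k % 2 < 2 := Nat.mod_lt _ two_pos
          rcases (by omega : k % 2 = 0 ∨ k % 2 = 1) with hh | hh
          · simp [hh]
          · have hb := hbits 0
            rw [Nat.testBit_zero, Nat.testBit_zero, hh] at hb
            simp only [decide_eq_true_eq] at hb
            rw [hh, hb (by simp)]
            rfl
        exact ⟨h1, h2⟩

theorem stmt_19 (p : ℕ) (hp : p.Prime) (h3 : 3 < p)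
    (h : ∀ j, 1 ≤ j → j ≤ p - 1 →
      Nat.choose p j ≡ Nat.choose p (3 * j % p) [MOD 2]) :
    ∃ n, p + 1 = 2 ^ n := by
  by_contra hcon
  push_neg at hcon
  -- p is odd
  have hodd : p % 2 = 1 := Nat.odd_iff.mp (hp.odd_of_ne_two (by omega))
  -- there is a zero bit
  have hex : ∃ i, p.testBit i = false :=
    ⟨p, Nat.testBit_eq_false_of_lt (Nat.lt_two_pow_self (n := p))⟩
  classical
  let k := Nat.find hex
  have hk : p.testBit k = false := Nat.find_spec hex
  have hmin : ∀ i < k, p.testBit i = true := by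
    intro i hi
    have := Nat.find_min hex hi
    simpa using this
  have hk1 : 1 ≤ k := by
    rcases Nat.eq_zero_or_pos k with h0 | h0
    · exfalso
      rw [h0, Nat.testBit_zero, hodd] at hk
      simp at hk
    · exact h0
  -- p ≥ 2^(k+1)
  have hbig : 2 ^ (k + 1) ≤ p := by
    by_contra hlt
    push_neg at hlt
    have hpeq : p = 2 ^ k - 1 := by
      apply Nat.eq_of_testBit_eq
      intro i
      rw [Nat.testBit_two_pow_sub_one]
      rcases lt_trichotomy i k with hik | hik | hik
      · simp [hmin i hik, hik]
      · subst hik; simp [hk]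
      · have : p.testBit i = false :=
          Nat.testBit_eq_false_of_lt (lt_of_lt_of_le hlt
            (Nat.pow_le_pow_right (by norm_num) (by omega)))
        have hik2 : ¬ i < k := by omega
        simp [this, hik2]
    have h2k : 1 ≤ 2 ^ k := Nat.one_le_two_pow
    exact hcon k (by omega)
  -- set j = 2^(k-1)
  set j := 2 ^ (k - 1) with hj
  have hjk : 2 * j = 2 ^ k := by
    rw [hj, ← pow_succ']
    congr 1
    omega
  have hp2 : 2 ^ (k + 1) = 2 ^ k * 2 := pow_succ 2 k
  have hj1 : 1 ≤ j := Nat.one_le_two_pow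
  have h3j : 3 * j < p := by omega
  have hjp : j ≤ p - 1 := by omega
  have hmod := h j (Nat.one_le_two_pow) hjp
  rw [Nat.mod_eq_of_lt h3j] at hmod
  -- C(p, j) is odd
  have hodd1 : Nat.choose p j % 2 = 1 := by
    rw [choose_parity]
    intro i hbit
    rw [hj, Nat.testBit_two_pow] at hbit
    have : k - 1 = i := by simpa using hbit
    subst this
    exact hmin (k - 1) (by omega)
  -- C(p, 3j) is even
  have heven : Nat.choose p (3 * j) % 2 ≠ 1 := by
    intro hc
    have hb := (choose_parity (3 * j) p).mp hc k ?_
    · rw [hk] at hb; simp at hb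
    rw [Nat.testBit_eq_decide_div_mod_eq]
    have hdiv : 3 * j / 2 ^ k = 1 := by
      rw [← hjk]
      apply Nat.div_eq_of_lt_le <;> omega
    simp [hdiv]
  have : Nat.choose p j % 2 = Nat.choose p (3 * j) % 2 := hmod
  omega
end
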